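/- arXiv:1906.02377 — 4 statements merged into one kernel-verified Lean document; each statement's English description precedes it below -/
import Mathlib

section
/- Discrete Girsanov shift: Let (Ω, F, Q) be a probability space, n₀ and n_p positive integers, c > 0 a real constant. Let (Z_k)_{k≥1} be i.i.d. random vectors Ω → ℝ^{n₀}, each with law the n₀-fold product of the standard normal N(0,1), and let (X_k)_{k≥1} be random vectors Ω → ℝ^{n₀} with all components taking values in {−1, +1}, such that the family (X_k) is independent of the family (Z_k) under Q. Define β_{n_p} = exp(c Σ_{k=1}^{n_p} ⟨X_k, Z_k⟩ − ½ c² n₀ n_p) and the probability measure P on F_{n_p} = σ(X_k; k ≥ 1) ∨ σ(Z_1, …, Z_{n_p}) by P(A) = ∫_A β_{n_p} dQ. Then, under P, the shifted vectors W_k := Z_k − cX_k for 1 ≤ k ≤ n_p are mutually independent standard Gaussian random vectors in ℝ^{n₀}: the pushforward of P under ω ↦ (W_1(ω), …, W_{n_p}(ω)) equals the n_p-fold product of the n₀-fold product of N(0,1). -/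
open MeasureTheory ProbabilityTheory

namespace Stmt9Aux

open ENNReal Real

lemma prod_Icc_one {M : Type*} [CommMonoid M] (n : ℕ) (h : ℕ → M) :
    ∏ k ∈ Finset.Icc 1 n, h k = ∏ k : Fin n, h (k.1 + 1) := by
  rw [← Finset.Ico_add_one_right_eq_Icc, Finset.prod_Ico_eq_prod_range, show n + 1 - 1 = n from rfl,
    ← Fin.prod_univ_eq_prod_range (fun i => h (1 + i)) n]
  exact Finset.prod_congr rfl fun k _ => by rw [add_comm]

lemma sum_Icc_one (n : ℕ) (h : ℕ → ℝ) :
    ∑ k ∈ Finset.Icc 1 n, h k = ∑ k : Fin n, h (k.1 + 1) := by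
  rw [← Finset.Ico_add_one_right_eq_Icc, Finset.sum_Ico_eq_sum_range, show n + 1 - 1 = n from rfl,
    ← Fin.sum_univ_eq_sum_range (fun i => h (1 + i)) n]
  exact Finset.sum_congr rfl fun k _ => by rw [add_comm]

lemma iInter_Icc_one {α : Type*} (n : ℕ) (A : ℕ → Set α) :
    ⋂ k ∈ Finset.Icc 1 n, A k = ⋂ k : Fin n, A (k.1 + 1) := by
  ext x
  simp only [Set.mem_iInter, Finset.mem_Icc]
  constructor
  · rintro H k
    exact H (k.1 + 1) ⟨by omega, by omega⟩
  · rintro H m ⟨h1, h2⟩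
    have := H ⟨m - 1, by omega⟩
    simpa [Nat.sub_add_cancel h1] using this

lemma lintegral_pi_prod {E : Type*} [MeasurableSpace E] :
    ∀ (n : ℕ) (μ : Fin n → Measure E), (∀ i, SigmaFinite (μ i)) →
      ∀ (f : Fin n → E → ℝ≥0∞), (∀ i, Measurable (f i)) →
      ∫⁻ x : Fin n → E, ∏ i, f i (x i) ∂Measure.pi μ = ∏ i, ∫⁻ t, f i t ∂μ i := by
  intro n
  induction n with
  | zero =>
    intro μ _ f _
    simp [lintegral_const, Measure.pi_univ]
  | succ n ih =>
    intro μ hσ f hf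
    haveI := hσ
    have hmeas : Measurable fun x : Fin (n + 1) → E => ∏ i, f i (x i) :=
      Finset.measurable_prod _ fun i _ => (hf i).comp (measurable_pi_apply i)
    have hmp := (measurePreserving_piFinSuccAbove μ 0).symm
    rw [← hmp.lintegral_comp hmeas]
    simp_rw [MeasurableEquiv.piFinSuccAbove_symm_apply, Fin.insertNthEquiv, Equiv.coe_fn_mk,
      Fin.insertNth_zero, Fin.prod_univ_succ, Fin.cons_zero, Fin.cons_succ, Fin.zero_succAbove,
      cast_eq]
    rw [lintegral_prod_mul (f := f 0) (g := fun y : Fin n → E => ∏ i : Fin n, f i.succ (y i))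
      (hf 0).aemeasurable
      ((Finset.measurable_prod _ fun i _ =>
        (hf i.succ).comp (measurable_pi_apply i)).aemeasurable)]
    rw [ih (fun i => μ i.succ) (fun i => hσ i.succ) (fun i => f i.succ) (fun i => hf i.succ)]

lemma pi_withDensity {n : ℕ} {E : Type*} [MeasurableSpace E]
    (μ : Fin n → Measure E) [∀ i, SigmaFinite (μ i)]
    (f : Fin n → E → ℝ≥0∞) (hf : ∀ i, Measurable (f i))
    [∀ i, SigmaFinite ((μ i).withDensity (f i))] :
    Measure.pi (fun i => (μ i).withDensity (f i))
      = (Measure.pi μ).withDensity (fun x => ∏ i, f i (x i)) := by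
  refine Measure.pi_eq fun s hs => ?_
  rw [withDensity_apply _ (MeasurableSet.univ_pi hs),
    ← lintegral_indicator (MeasurableSet.univ_pi hs)]
  have key : ∀ x : Fin n → E, (Set.univ.pi s).indicator (fun y => ∏ i, f i (y i)) x
      = ∏ i, (s i).indicator (f i) (x i) := by
    intro x
    by_cases hx : x ∈ Set.univ.pi s
    · rw [Set.indicator_of_mem hx]
      exact Finset.prod_congr rfl fun i _ =>
        (Set.indicator_of_mem (hx i (Set.mem_univ i)) _).symm
    · rw [Set.indicator_of_notMem hx]
      have : ∃ i, x i ∉ s i := by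
        by_contra h
        push_neg at h
        exact hx fun i _ => h i
      obtain ⟨i, hi⟩ := this
      exact (Finset.prod_eq_zero (Finset.mem_univ i) (Set.indicator_of_notMem hi _)).symm
  simp_rw [key]
  rw [lintegral_pi_prod n μ inferInstance _ (fun i => (hf i).indicator (hs i))]
  refine Finset.prod_congr rfl fun i _ => ?_
  rw [withDensity_apply _ (hs i)]
  exact lintegral_indicator (hs i) (f i)

lemma map_pi {n : ℕ} {E F : Type*} [MeasurableSpace E] [MeasurableSpace F]
    (μ : Fin n → Measure E) [∀ i, SigmaFinite (μ i)]
    (g : Fin n → E → F) (hg : ∀ i, Measurable (g i))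
    (ν : Fin n → Measure F) [∀ i, SigmaFinite (ν i)]
    (h : ∀ i, (μ i).map (g i) = ν i) :
    (Measure.pi μ).map (fun x i => g i (x i)) = Measure.pi ν := by
  have hm : Measurable fun (x : Fin n → E) i => g i (x i) :=
    measurable_pi_lambda _ fun i => (hg i).comp (measurable_pi_apply i)
  refine (Measure.pi_eq fun s hs => ?_).symm
  rw [Measure.map_apply hm (MeasurableSet.univ_pi hs)]
  have hpre : (fun (x : Fin n → E) i => g i (x i)) ⁻¹' Set.univ.pi s
      = Set.univ.pi fun i => g i ⁻¹' s i := by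
    ext x; simp [Set.mem_pi]
  rw [hpre, Measure.pi_pi]
  exact Finset.prod_congr rfl fun i _ => by
    rw [← h i, Measure.map_apply (hg i) (hs i)]

lemma gauss_tilt (b : ℝ) :
    (gaussianReal 0 1).withDensity (fun t => ENNReal.ofReal (Real.exp (b * t - b ^ 2 / 2)))
      = gaussianReal b 1 := by
  have h1 : (1 : NNReal) ≠ 0 := one_ne_zero
  have hm : Measurable fun t : ℝ => ENNReal.ofReal (Real.exp (b * t - b ^ 2 / 2)) :=
    Measurable.ennreal_ofReal (Measurable.exp ((measurable_id.const_mul b).sub_const _))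
  rw [gaussianReal_of_var_ne_zero 0 h1, gaussianReal_of_var_ne_zero b h1,
    ← withDensity_mul _ (measurable_gaussianPDF 0 1) hm]
  congr 1
  funext t
  simp only [Pi.mul_apply, gaussianPDF]
  rw [← ENNReal.ofReal_mul (gaussianPDFReal_nonneg 0 1 t)]
  congr 1
  unfold gaussianPDFReal
  simp only [NNReal.coe_one, mul_one, sub_zero]
  rw [mul_assoc, ← Real.exp_add]
  congr 1
  ring

lemma gauss_shift (b : ℝ) :
    (gaussianReal b 1).map (fun t => t - b) = gaussianReal 0 1 := by
  have h : (fun t : ℝ => t - b) = (· + (-b)) := by funext t; ring_nf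
  rw [h, gaussianReal_map_add_const, add_neg_cancel]

lemma flat_tilt {n : ℕ} (b : Fin n → ℝ) :
    (Measure.pi fun _ : Fin n => gaussianReal 0 1).withDensity
        (fun z => ENNReal.ofReal (Real.exp (∑ i, (b i * z i - b i ^ 2 / 2))))
      = Measure.pi fun i => gaussianReal (b i) 1 := by
  have hden : (fun z : Fin n → ℝ =>
        ENNReal.ofReal (Real.exp (∑ i, (b i * z i - b i ^ 2 / 2))))
      = fun z => ∏ i, ENNReal.ofReal (Real.exp (b i * z i - b i ^ 2 / 2)) := by
    funext z
    rw [Real.exp_sum, ← ENNReal.ofReal_prod_of_nonneg (fun i _ => (Real.exp_pos _).le)]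
  haveI : ∀ i : Fin n, SigmaFinite ((gaussianReal 0 1).withDensity
      fun t => ENNReal.ofReal (Real.exp (b i * t - b i ^ 2 / 2))) := fun i => by
    rw [gauss_tilt]; infer_instance
  rw [hden, ← pi_withDensity (fun _ => gaussianReal 0 1)
    (fun i t => ENNReal.ofReal (Real.exp (b i * t - b i ^ 2 / 2)))
    (fun i => Measurable.ennreal_ofReal (Measurable.exp
      ((measurable_id.const_mul (b i)).sub_const _)))]
  exact congrArg Measure.pi (funext fun i => gauss_tilt (b i))

lemma core_flat {n : ℕ} (b : Fin n → ℝ) :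
    ((Measure.pi fun _ : Fin n => gaussianReal 0 1).withDensity
        (fun z => ENNReal.ofReal (Real.exp (∑ i, (b i * z i - b i ^ 2 / 2))))).map
      (fun z i => z i - b i)
      = Measure.pi fun _ : Fin n => gaussianReal 0 1 := by
  rw [flat_tilt]
  exact map_pi _ (fun i t => t - b i) (fun i => measurable_id.sub_const _) _
    (fun i => gauss_shift (b i))

lemma core_nested {m n : ℕ} (b : Fin m → Fin n → ℝ) :
    ((Measure.pi fun _ : Fin m => Measure.pi fun _ : Fin n => gaussianReal 0 1).withDensity
        (fun z => ENNReal.ofReal (Real.exp (∑ k, ∑ i, (b k i * z k i - b k i ^ 2 / 2))))).map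
      (fun z k i => z k i - b k i)
      = Measure.pi fun _ : Fin m => Measure.pi fun _ : Fin n => gaussianReal 0 1 := by
  have hden : (fun z : Fin m → Fin n → ℝ =>
        ENNReal.ofReal (Real.exp (∑ k, ∑ i, (b k i * z k i - b k i ^ 2 / 2))))
      = fun z => ∏ k,
          ENNReal.ofReal (Real.exp (∑ i, (b k i * z k i - b k i ^ 2 / 2))) := by
    funext z
    rw [Real.exp_sum, ← ENNReal.ofReal_prod_of_nonneg (fun i _ => (Real.exp_pos _).le)]
  have hfm : ∀ k : Fin m, Measurable (fun y : Fin n → ℝ =>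
      ENNReal.ofReal (Real.exp (∑ i, (b k i * y i - b k i ^ 2 / 2)))) := by
    intro k
    apply ENNReal.measurable_ofReal.comp
    apply Real.continuous_exp.measurable.comp
    exact Finset.measurable_sum _ fun i _ =>
      ((measurable_pi_apply i).const_mul _).sub_const _
  haveI : ∀ k : Fin m, SigmaFinite
      ((Measure.pi fun _ : Fin n => gaussianReal 0 1).withDensity
        fun y => ENNReal.ofReal (Real.exp (∑ i, (b k i * y i - b k i ^ 2 / 2)))) := fun k => by
    rw [flat_tilt]; infer_instance
  rw [hden, ← pi_withDensity (fun _ => Measure.pi fun _ : Fin n => gaussianReal 0 1)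
    (fun k y => ENNReal.ofReal (Real.exp (∑ i, (b k i * y i - b k i ^ 2 / 2)))) hfm]
  exact map_pi _ (fun k (y : Fin n → ℝ) i => y i - b k i)
    (fun k => measurable_pi_lambda _ fun i => (measurable_pi_apply i).sub_const _) _
    (fun k => core_flat (b k))

lemma map_withDensity_comp {Ω A B : Type*} [MeasurableSpace Ω] [MeasurableSpace A]
    [MeasurableSpace B] (μ : Measure Ω) {T : Ω → A} (hT : Measurable T)
    {f : A → ℝ≥0∞} (hf : Measurable f) {ψ : A → B} (hψ : Measurable ψ) :
    (μ.withDensity (fun ω => f (T ω))).map (fun ω => ψ (T ω))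
      = ((μ.map T).withDensity f).map ψ := by
  have h1 : Measurable fun ω => ψ (T ω) := hψ.comp hT
  ext s hs
  rw [Measure.map_apply h1 hs, Measure.map_apply hψ hs,
    withDensity_apply _ (hψ hs), setLIntegral_map (hψ hs) hf hT]
  exact withDensity_apply _ (hT (hψ hs))

lemma final {m n : ℕ} (c : ℝ) (μX : Measure (Fin m → Fin n → ℝ)) [IsProbabilityMeasure μX]
    (hpm : ∀ᵐ x ∂μX, ∀ k i, x k i = 1 ∨ x k i = -1) :
    ((μX.prod (Measure.pi fun _ : Fin m => Measure.pi fun _ : Fin n =>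
        gaussianReal 0 1)).withDensity
        (fun p => ENNReal.ofReal (Real.exp
          (c * ∑ k, ∑ i, p.1 k i * p.2 k i - c ^ 2 * n * m / 2)))).map
      (fun p k i => p.2 k i - c * p.1 k i)
      = Measure.pi fun _ : Fin m => Measure.pi fun _ : Fin n => gaussianReal 0 1 := by
  set γ₂ : Measure (Fin m → Fin n → ℝ) :=
    Measure.pi fun _ : Fin m => Measure.pi fun _ : Fin n => gaussianReal 0 1 with hγ₂
  set G : (Fin m → Fin n → ℝ) × (Fin m → Fin n → ℝ) → ℝ≥0∞ :=
    fun p => ENNReal.ofReal (Real.exp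
      (c * ∑ k, ∑ i, p.1 k i * p.2 k i - c ^ 2 * n * m / 2)) with hG
  set ψ : (Fin m → Fin n → ℝ) × (Fin m → Fin n → ℝ) → (Fin m → Fin n → ℝ) :=
    fun p k i => p.2 k i - c * p.1 k i with hψdef
  have hc1 : ∀ (k : Fin m) (i : Fin n),
      Measurable fun p : (Fin m → Fin n → ℝ) × (Fin m → Fin n → ℝ) => p.1 k i := fun k i =>
    (measurable_pi_apply i).comp ((measurable_pi_apply k).comp measurable_fst)
  have hc2 : ∀ (k : Fin m) (i : Fin n),
      Measurable fun p : (Fin m → Fin n → ℝ) × (Fin m → Fin n → ℝ) => p.2 k i := fun k i =>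
    (measurable_pi_apply i).comp ((measurable_pi_apply k).comp measurable_snd)
  have hψm : Measurable ψ :=
    measurable_pi_lambda _ fun k => measurable_pi_lambda _ fun i =>
      ((hc2 k i).sub ((hc1 k i).const_mul c))
  have hGm : Measurable G := by
    apply Measurable.ennreal_ofReal
    apply Measurable.exp
    apply Measurable.sub_const
    apply Measurable.const_mul
    exact Finset.measurable_sum _ fun k _ => Finset.measurable_sum _ fun i _ =>
      (hc1 k i).mul (hc2 k i)
  ext s hs
  rw [Measure.map_apply hψm hs, withDensity_apply _ (hψm hs),
    ← lintegral_indicator (hψm hs), lintegral_prod _ (hGm.indicator (hψm hs)).aemeasurable]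
  have key : ∀ x : Fin m → Fin n → ℝ, (∀ k i, x k i = 1 ∨ x k i = -1) →
      ∫⁻ z, (ψ ⁻¹' s).indicator G (x, z) ∂γ₂ = γ₂ s := by
    intro x hx
    set b : Fin m → Fin n → ℝ := fun k i => c * x k i with hb
    have hGx : ∀ z, G (x, z) = ENNReal.ofReal
        (Real.exp (∑ k, ∑ i, (b k i * z k i - b k i ^ 2 / 2))) := by
      intro z
      have hsq : ∀ k i, b k i ^ 2 = c ^ 2 := by
        intro k i
        rcases hx k i with h | h <;> simp [hb, h]
      have hsum : ∑ k, ∑ i, (b k i * z k i - b k i ^ 2 / 2)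
          = c * ∑ k, ∑ i, x k i * z k i - c ^ 2 * n * m / 2 := by
        simp_rw [hsq, Finset.sum_sub_distrib, Finset.sum_const, Finset.card_univ,
          Fintype.card_fin, nsmul_eq_mul, hb, mul_assoc c, ← Finset.mul_sum]
        push_cast
        ring_nf
      rw [hG]
      simp only
      rw [hsum]
    have hDm : Measurable (fun z : Fin m → Fin n → ℝ => ENNReal.ofReal
        (Real.exp (∑ k, ∑ i, (b k i * z k i - b k i ^ 2 / 2)))) := by
      apply Measurable.ennreal_ofReal
      apply Measurable.exp
      refine Finset.measurable_sum _ fun k _ => Finset.measurable_sum _ fun i _ => ?_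
      have : Measurable fun z : Fin m → Fin n → ℝ => z k i :=
        (measurable_pi_apply i).comp (measurable_pi_apply k)
      exact (this.const_mul _).sub_const _
    have hshift : Measurable (fun z : Fin m → Fin n → ℝ => fun k i => z k i - b k i) :=
      measurable_pi_lambda _ fun k => measurable_pi_lambda _ fun i => by
        have : Measurable fun z : Fin m → Fin n → ℝ => z k i :=
          (measurable_pi_apply i).comp (measurable_pi_apply k)
        exact this.sub_const _
    have hind : ∀ z, (ψ ⁻¹' s).indicator G (x, z)
        = ((fun z : Fin m → Fin n → ℝ => fun k i => z k i - b k i) ⁻¹' s).indicator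
          (fun z => ENNReal.ofReal
            (Real.exp (∑ k, ∑ i, (b k i * z k i - b k i ^ 2 / 2)))) z := by
      intro z
      have hmem : (x, z) ∈ ψ ⁻¹' s ↔
          z ∈ (fun z : Fin m → Fin n → ℝ => fun k i => z k i - b k i) ⁻¹' s := Iff.rfl
      by_cases hz : (x, z) ∈ ψ ⁻¹' s
      · rw [Set.indicator_of_mem hz, Set.indicator_of_mem (hmem.mp hz), hGx]
      · rw [Set.indicator_of_notMem hz, Set.indicator_of_notMem fun h => hz (hmem.mpr h)]
    calc ∫⁻ z, (ψ ⁻¹' s).indicator G (x, z) ∂γ₂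
        = ∫⁻ z, ((fun z : Fin m → Fin n → ℝ => fun k i => z k i - b k i) ⁻¹' s).indicator
            (fun z => ENNReal.ofReal
              (Real.exp (∑ k, ∑ i, (b k i * z k i - b k i ^ 2 / 2)))) z ∂γ₂ :=
          lintegral_congr hind
      _ = (γ₂.withDensity (fun z => ENNReal.ofReal
            (Real.exp (∑ k, ∑ i, (b k i * z k i - b k i ^ 2 / 2)))))
            ((fun z : Fin m → Fin n → ℝ => fun k i => z k i - b k i) ⁻¹' s) := by
          rw [withDensity_apply _ (hshift hs), lintegral_indicator (hshift hs)]
      _ = ((γ₂.withDensity (fun z => ENNReal.ofReal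
            (Real.exp (∑ k, ∑ i, (b k i * z k i - b k i ^ 2 / 2))))).map
            (fun z k i => z k i - b k i)) s := (Measure.map_apply hshift hs).symm
      _ = γ₂ s := by rw [hγ₂, core_nested b]
  have hae : ∀ᵐ x ∂μX, ∫⁻ z, (ψ ⁻¹' s).indicator G (x, z) ∂γ₂ = γ₂ s := by
    filter_upwards [hpm] with x hx using key x hx
  rw [lintegral_congr_ae hae]
  simp

end Stmt9Aux

/-- **discrete Girsanov shift.** With i.i.d. standard Gaussian observations
`(Z_k)_{k≥1}` and signals `(X_k)_{k≥1}` (components in `{−1,+1}`) independent of them under `Q`,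
define `β_{n_p} = exp(c ∑_{k=1}^{n_p} ⟨X_k, Z_k⟩ − ½ c² n₀ n_p)` and `dP = β_{n_p} dQ`.
Then under `P` the shifted vectors `W_k = Z_k − c X_k`, `1 ≤ k ≤ n_p`, are mutually independent
standard Gaussian vectors in `ℝ^{n₀}`. -/
theorem stmt_9
    {Ω : Type*} [mΩ : MeasurableSpace Ω] (Q : Measure Ω) [IsProbabilityMeasure Q]
    (n₀ n_p : ℕ) (hn₀ : 0 < n₀) (hn_p : 0 < n_p) (c : ℝ) (hc : 0 < c)
    (Z : ℕ → Ω → (Fin n₀ → ℝ)) (X : ℕ → Ω → (Fin n₀ → ℝ))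
    (hZ_meas : ∀ k, Measurable (Z k))
    (hZ_law : ∀ k, 1 ≤ k → Q.map (Z k) = Measure.pi fun _ => gaussianReal 0 1)
    (hZ_iid : iIndepFun Z Q)
    (hX_meas : ∀ k, Measurable (X k))
    (hX_pm : ∀ k ω i, X k ω i = 1 ∨ X k ω i = -1)
    (hXZ_indep :
      IndepFun (fun ω => fun k => X k ω) (fun ω => fun k => Z k ω) Q)
    (β : Ω → ℝ)
    (hβ : ∀ ω, β ω =
      Real.exp (c * ∑ k ∈ Finset.Icc 1 n_p, ∑ i, X k ω i * Z k ω i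
        - c ^ 2 * n₀ * n_p / 2))
    (P : Measure Ω)
    (hP : P = Q.withDensity fun ω => ENNReal.ofReal (β ω))
    (W : ℕ → Ω → (Fin n₀ → ℝ))
    (hW : ∀ k ω i, W k ω i = Z k ω i - c * X k ω i) :
    P.map (fun ω => fun k : Fin n_p => W (k.val + 1) ω)
      = Measure.pi fun _ : Fin n_p => Measure.pi fun _ : Fin n₀ => gaussianReal 0 1 := by
  classical
  set X' : Ω → Fin n_p → Fin n₀ → ℝ := fun ω k => X (k.1 + 1) ω with hX'def
  set Z' : Ω → Fin n_p → Fin n₀ → ℝ := fun ω k => Z (k.1 + 1) ω with hZ'def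
  have hX'm : Measurable X' := measurable_pi_lambda _ fun k => hX_meas _
  have hZ'm : Measurable Z' := measurable_pi_lambda _ fun k => hZ_meas _
  -- law of Z'
  have hZ'law : Q.map Z' = Measure.pi fun _ : Fin n_p =>
      Measure.pi fun _ : Fin n₀ => gaussianReal 0 1 := by
    refine (Measure.pi_eq fun s hs => ?_).symm
    rw [Measure.map_apply hZ'm (MeasurableSet.univ_pi hs)]
    set t : ℕ → Set (Fin n₀ → ℝ) :=
      fun m => if h : 1 ≤ m ∧ m ≤ n_p then s ⟨m - 1, by omega⟩ else Set.univ with ht_def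
    have ht_meas : ∀ m, MeasurableSet (t m) := by
      intro m
      by_cases h : 1 ≤ m ∧ m ≤ n_p
      · rw [ht_def]; simp only [dif_pos h]; exact hs _
      · rw [ht_def]; simp only [dif_neg h]; exact MeasurableSet.univ
    have ht : ∀ k : Fin n_p, t (k.1 + 1) = s k := by
      intro k
      have h : 1 ≤ k.1 + 1 ∧ k.1 + 1 ≤ n_p := ⟨by omega, by omega⟩
      rw [ht_def]
      simp only [dif_pos h]
      exact congrArg s (Fin.ext (by simp))
    have hpre : Z' ⁻¹' Set.univ.pi s = ⋂ k : Fin n_p, Z (k.1 + 1) ⁻¹' s k := by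
      ext ω
      simp [hZ'def, Set.mem_pi]
    rw [hpre]
    have hiI : (⋂ k : Fin n_p, Z (k.1 + 1) ⁻¹' s k)
        = ⋂ m ∈ Finset.Icc 1 n_p, Z m ⁻¹' t m := by
      rw [Stmt9Aux.iInter_Icc_one]
      exact Set.iInter_congr fun k => by rw [ht k]
    rw [hiI, hZ_iid.meas_biInter (fun m _ => ⟨t m, ht_meas m, rfl⟩),
      Stmt9Aux.prod_Icc_one]
    refine Finset.prod_congr rfl fun k _ => ?_
    rw [ht k, ← Measure.map_apply (hZ_meas _) (hs k), hZ_law (k.1 + 1) (by omega)]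
  -- independence of X' and Z'
  have hφm : Measurable fun g : ℕ → Fin n₀ → ℝ => fun k : Fin n_p => g (k.1 + 1) :=
    measurable_pi_lambda _ fun k => measurable_pi_apply _
  have hindep' : IndepFun X' Z' Q := hXZ_indep.comp hφm hφm
  have hjoint : Q.map (fun ω => (X' ω, Z' ω)) = (Q.map X').prod (Q.map Z') :=
    (indepFun_iff_map_prod_eq_prod_map_map hX'm.aemeasurable hZ'm.aemeasurable).mp hindep'
  haveI : IsProbabilityMeasure (Q.map X') := Measure.isProbabilityMeasure_map hX'm.aemeasurable
  -- structure of β and W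
  set T : Ω → (Fin n_p → Fin n₀ → ℝ) × (Fin n_p → Fin n₀ → ℝ) :=
    fun ω => (X' ω, Z' ω) with hTdef
  have hTm : Measurable T := hX'm.prodMk hZ'm
  set G : (Fin n_p → Fin n₀ → ℝ) × (Fin n_p → Fin n₀ → ℝ) → ENNReal :=
    fun p => ENNReal.ofReal (Real.exp
      (c * ∑ k, ∑ i, p.1 k i * p.2 k i - c ^ 2 * n₀ * n_p / 2)) with hGdef
  set ψ : (Fin n_p → Fin n₀ → ℝ) × (Fin n_p → Fin n₀ → ℝ) → (Fin n_p → Fin n₀ → ℝ) :=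
    fun p k i => p.2 k i - c * p.1 k i with hψdef
  have hc1 : ∀ (k : Fin n_p) (i : Fin n₀),
      Measurable fun p : (Fin n_p → Fin n₀ → ℝ) × (Fin n_p → Fin n₀ → ℝ) => p.1 k i :=
    fun k i => (measurable_pi_apply i).comp ((measurable_pi_apply k).comp measurable_fst)
  have hc2 : ∀ (k : Fin n_p) (i : Fin n₀),
      Measurable fun p : (Fin n_p → Fin n₀ → ℝ) × (Fin n_p → Fin n₀ → ℝ) => p.2 k i :=
    fun k i => (measurable_pi_apply i).comp ((measurable_pi_apply k).comp measurable_snd)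
  have hψm : Measurable ψ :=
    measurable_pi_lambda _ fun k => measurable_pi_lambda _ fun i =>
      ((hc2 k i).sub ((hc1 k i).const_mul c))
  have hGm : Measurable G := by
    apply Measurable.ennreal_ofReal
    apply Measurable.exp
    apply Measurable.sub_const
    apply Measurable.const_mul
    exact Finset.measurable_sum _ fun k _ => Finset.measurable_sum _ fun i _ =>
      (hc1 k i).mul (hc2 k i)
  have hβT : (fun ω => ENNReal.ofReal (β ω)) = fun ω => G (T ω) := by
    funext ω
    rw [hβ ω, Stmt9Aux.sum_Icc_one n_p fun k => ∑ i, X k ω i * Z k ω i]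
  have hWT : (fun ω => fun k : Fin n_p => W (k.val + 1) ω) = fun ω => ψ (T ω) := by
    funext ω k i
    exact hW _ ω i
  -- concentration of the law of X' on ±1 vectors
  have hpm_set : MeasurableSet {x : Fin n_p → Fin n₀ → ℝ | ∀ k i, x k i = 1 ∨ x k i = -1} := by
    rw [Set.setOf_forall]
    refine MeasurableSet.iInter fun k => ?_
    rw [Set.setOf_forall]
    refine MeasurableSet.iInter fun i => ?_
    have hev : Measurable fun x : Fin n_p → Fin n₀ → ℝ => x k i :=
      (measurable_pi_apply i).comp (measurable_pi_apply k)
    rw [Set.setOf_or]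
    exact (hev (measurableSet_singleton 1)).union (hev (measurableSet_singleton (-1)))
  have hpm : ∀ᵐ x ∂(Q.map X'), ∀ k i, x k i = 1 ∨ x k i = -1 := by
    rw [ae_map_iff hX'm.aemeasurable hpm_set]
    exact Filter.Eventually.of_forall fun ω k i => hX_pm _ ω i
  -- conclude
  rw [hP, hβT, hWT, Stmt9Aux.map_withDensity_comp Q hTm hGm hψm, hjoint, hZ'law]
  exact Stmt9Aux.final c (Q.map X') hpm
end

section
/- Let (Ω, F, P) be a probability space, let α : Ω → ℝ be measurable with α(ω) > 0 for all ω and ∫ α dP = 1, and let Q be the probability measure with density α with respect to P. Let B be a sub-σ-field of F. Then, P-almost surely, E_P(α | B) · E_Q(α⁻¹ | B) = 1; equivalently E_P(α | B) = 1 / E_Q(α⁻¹ | B) almost surely. -/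
open MeasureTheory ProbabilityTheory
open scoped ENNReal NNReal

/-- If `dQ = α dP` with `α` everywhere positive and `∫ α dP = 1`, and `B` is
a sub-σ-field, then almost surely `E_P(α | B) · E_Q(α⁻¹ | B) = 1`, equivalently
`E_P(α | B) = 1 / E_Q(α⁻¹ | B)`. -/
theorem stmt_12
    {Ω : Type*} (B : MeasurableSpace Ω) [mΩ : MeasurableSpace Ω]
    (P : Measure Ω) [IsProbabilityMeasure P]
    (α : Ω → ℝ) (hα_meas : Measurable[mΩ] α) (hα_pos : ∀ ω, 0 < α ω)
    (hα_int : ∫ ω, α ω ∂P = 1)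
    (Q : Measure Ω)
    (hQ : Q = P.withDensity fun ω => ENNReal.ofReal (α ω))
    (hB : B ≤ mΩ) :
    ((fun ω => (P[α | B]) ω * (Q[(fun ω' => (α ω')⁻¹) | B]) ω) =ᵐ[P] fun _ => 1) ∧
      (P[α | B] =ᵐ[P] fun ω => 1 / (Q[(fun ω' => (α ω')⁻¹) | B]) ω) := by
  -- α is integrable
  have hα_int' : Integrable α P := by
    by_contra h
    rw [integral_undef h] at hα_int
    norm_num at hα_int
  have hν : Measurable fun x => (α x).toNNReal := hα_meas.real_toNNReal
  have hQ' : Q = P.withDensity fun x => ((α x).toNNReal : ℝ≥0∞) := hQ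
  -- Q is a probability measure
  have hQprob : IsProbabilityMeasure Q := by
    constructor
    rw [hQ, withDensity_apply _ MeasurableSet.univ, Measure.restrict_univ,
      ← ofReal_integral_eq_lintegral_ofReal hα_int'
        (Filter.Eventually.of_forall fun ω => (hα_pos ω).le), hα_int]
    simp
  haveI := hQprob
  set k : Ω → ℝ := Q[(fun ω' => (α ω')⁻¹) | B] with hk_def
  have hk_meas : StronglyMeasurable[B] k := stronglyMeasurable_condExp
  have hk_intQ : Integrable k Q := integrable_condExp
  have h_ae_lt : ∀ᵐ x ∂P, ((α x).toNNReal : ℝ≥0∞) < ∞ :=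
    Filter.Eventually.of_forall fun _ => ENNReal.coe_lt_top
  -- α⁻¹ is Q-integrable
  have hinv_int : Integrable (fun ω => (α ω)⁻¹) Q := by
    rw [hQ', integrable_withDensity_iff (hν.coe_nnreal_ennreal) h_ae_lt]
    have : (fun x => (α x)⁻¹ * (((α x).toNNReal : ℝ≥0∞)).toReal) = fun _ => (1 : ℝ) := by
      funext x
      simp [Real.coe_toNNReal _ (hα_pos x).le, inv_mul_cancel₀ (hα_pos x).ne']
    rw [this]
    exact integrable_const 1
  -- k * α is P-integrable
  have hkα_int : Integrable (fun ω => k ω * α ω) P := by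
    have := hk_intQ
    rw [hQ', integrable_withDensity_iff (hν.coe_nnreal_ennreal) h_ae_lt] at this
    refine this.congr (Filter.Eventually.of_forall fun x => ?_)
    simp [Real.coe_toNNReal _ (hα_pos x).le]
  -- pull-out property
  have h_pull : P[k * α | B] =ᵐ[P] k * P[α | B] :=
    condExp_mul_of_stronglyMeasurable_left hk_meas hkα_int hα_int'
  -- for every B-measurable s, ∫_s k·α dP = P s = ∫_s 1 dP
  have h_int_eq : ∀ s : Set Ω, MeasurableSet[B] s → P s < ⊤ →
      ∫ x in s, (1 : ℝ) ∂P = ∫ x in s, (k * α) x ∂P := by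
    intro s hs _
    have hs' : MeasurableSet[mΩ] s := hB s hs
    have h1 : ∫ x in s, (k * α) x ∂P = ∫ x in s, k x ∂Q := by
      rw [hQ', setIntegral_withDensity_eq_setIntegral_smul hν k hs']
      refine setIntegral_congr_fun hs' fun x _ => ?_
      simp [Pi.mul_apply, NNReal.smul_def, Real.coe_toNNReal _ (hα_pos x).le, mul_comm]
    have h2 : ∫ x in s, k x ∂Q = ∫ x in s, (α x)⁻¹ ∂Q :=
      setIntegral_condExp hB hinv_int hs
    have h3 : ∫ x in s, (α x)⁻¹ ∂Q = ∫ x in s, (1 : ℝ) ∂P := by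
      rw [hQ', setIntegral_withDensity_eq_setIntegral_smul hν _ hs']
      refine setIntegral_congr_fun hs' fun x _ => ?_
      simp [NNReal.smul_def, Real.coe_toNNReal _ (hα_pos x).le, mul_inv_cancel₀ (hα_pos x).ne']
    rw [h1, h2, h3]
  -- uniqueness: P[k*α|B] = 1 a.e.
  have h_one : (fun _ : Ω => (1 : ℝ)) =ᵐ[P] P[k * α | B] :=
    ae_eq_condExp_of_forall_setIntegral_eq hB hkα_int
      (fun s _ _ => (integrable_const 1).integrableOn)
      h_int_eq
      (StronglyMeasurable.aestronglyMeasurable stronglyMeasurable_const)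
  have hmain : (fun ω => (P[α | B]) ω * k ω) =ᵐ[P] fun _ => (1 : ℝ) := by
    filter_upwards [h_pull, h_one] with ω h1 h2
    simp only [Pi.mul_apply] at h1
    linarith [h1, h2]
  refine ⟨hmain, ?_⟩
  filter_upwards [hmain] with ω h
  exact eq_one_div_of_mul_eq_one_left (by linarith [h])
end

section
/- Conditional probability of an encoded block given the observations (main result): Let n₀, n be positive integers, c > 0 a real constant, and let C be a nonempty finite subset of ({−1,+1}^{n₀})^n (the code, viewed as a set of sequences x = (x_1, …, x_n) of branch vectors x_k ∈ {−1,+1}^{n₀} ⊆ ℝ^{n₀}). On a probability space (Ω, F, P), let X = (X_1, …, X_n) : Ω → (ℝ^{n₀})^n be uniformly distributed on C, let W = (W_1, …, W_n) : Ω → (ℝ^{n₀})^n have all n·n₀ components i.i.d. standard normal N(0,1), with X independent of W, and set Z_k = cX_k + W_k. Define the metric pm(x) = exp(c Σ_{k=1}^n ⟨x_k, Z_k⟩ − ½ c² n₀ n) for x ∈ C. Then for every 1 ≤ l ≤ n and every subset B ⊆ {−1,+1}^{n₀}, P-almost surely, P(X_l ∈ B | σ(Z_1, …, Z_n)) = (Σ_{x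 ∈ C, x_l ∈ B} pm(x)) / (Σ_{x ∈ C} pm(x)), where P(X_l ∈ B | σ(Z_1, …, Z_n)) denotes the conditional expectation of the indicator of {X_l ∈ B} given the σ-field generated by Z_1, …, Z_n. -/
open MeasureTheory ProbabilityTheory
open scoped Classical

namespace Stmt13Aux

open scoped ENNReal

lemma lintegral_pi_prod {δ : Type*} [Fintype δ] [DecidableEq δ] {κ : δ → Type*}
    [∀ i, MeasurableSpace (κ i)] [∀ i, Nonempty (κ i)]
    (μ : ∀ i, Measure (κ i)) [∀ i, SigmaFinite (μ i)]
    (f : ∀ i, κ i → ℝ≥0∞) (hf : ∀ i, Measurable (f i)) :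
    ∫⁻ x, ∏ i, f i (x i) ∂Measure.pi μ = ∏ i, ∫⁻ t, f i t ∂μ i := by
  have hF : Measurable fun x : ∀ i, κ i => ∏ i, f i (x i) :=
    Finset.measurable_prod _ fun i _ => (hf i).comp (measurable_pi_apply i)
  have key : ∀ s : Finset δ, ∀ x, (∫⋯∫⁻_s, (fun x => ∏ i, f i (x i)) ∂μ) x
      = (∏ i ∈ s, ∫⁻ t, f i t ∂μ i) * ∏ i ∈ sᶜ, f i (x i) := by
    intro s
    induction s using Finset.induction_on with
    | empty => intro x; simp
    | @insert i s hi ih =>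
      intro x
      rw [lmarginal_insert _ hF hi]
      have hupd : ∀ t, (∫⋯∫⁻_s, (fun x => ∏ j, f j (x j)) ∂μ) (Function.update x i t)
          = ((∏ j ∈ s, ∫⁻ t, f j t ∂μ j) * ∏ j ∈ sᶜ.erase i, f j (x j)) * f i t := by
        intro t
        rw [ih]
        have hisc : i ∈ sᶜ := Finset.mem_compl.2 hi
        rw [← Finset.prod_erase_mul _ _ hisc, ← mul_assoc]
        congr 2
        · exact Finset.prod_congr rfl fun j hj => by
            rw [Function.update_of_ne (Finset.ne_of_mem_erase hj)]
        · rw [Function.update_self]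
      simp_rw [hupd]
      rw [lintegral_const_mul _ (hf i), Finset.compl_insert, Finset.prod_insert hi]
      ring
  rw [lintegral_eq_lmarginal_univ (Classical.arbitrary _), key]
  simp

lemma map_pi_pi {δ : Type*} [Fintype δ] {α β : δ → Type*} [∀ i, MeasurableSpace (α i)]
    [∀ i, MeasurableSpace (β i)] (μ : ∀ i, Measure (α i)) [∀ i, IsProbabilityMeasure (μ i)]
    (T : ∀ i, α i → β i) (hT : ∀ i, Measurable (T i)) :
    (Measure.pi μ).map (fun x i => T i (x i)) = Measure.pi (fun i => (μ i).map (T i)) := by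
  haveI : ∀ i, IsProbabilityMeasure ((μ i).map (T i)) :=
    fun i => Measure.isProbabilityMeasure_map (hT i).aemeasurable
  have hTm : Measurable fun (x : ∀ i, α i) i => T i (x i) :=
    measurable_pi_lambda _ fun i => (hT i).comp (measurable_pi_apply i)
  refine (Measure.pi_eq (μ := fun i => (μ i).map (T i)) fun s hs => ?_).symm
  rw [Measure.map_apply hTm (MeasurableSet.univ_pi hs)]
  have hpre : (fun x i => T i (x i)) ⁻¹' (Set.pi Set.univ s)
      = Set.pi Set.univ (fun i => T i ⁻¹' s i) := by
    ext x; simp [Set.mem_pi]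
  rw [hpre, Measure.pi_pi]
  exact Finset.prod_congr rfl fun i _ => (Measure.map_apply (hT i) (hs i)).symm

lemma pi_withDensity {δ : Type*} [Fintype δ] [DecidableEq δ] {κ : δ → Type*}
    [∀ i, MeasurableSpace (κ i)] [∀ i, Nonempty (κ i)]
    (μ : ∀ i, Measure (κ i)) [∀ i, IsProbabilityMeasure (μ i)]
    (f : ∀ i, κ i → ℝ≥0∞) (hf : ∀ i, Measurable (f i))
    (hprob : ∀ i, IsProbabilityMeasure ((μ i).withDensity (f i))) :
    (Measure.pi μ).withDensity (fun x => ∏ i, f i (x i))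
      = Measure.pi (fun i => (μ i).withDensity (f i)) := by
  haveI := hprob
  refine (Measure.pi_eq (μ := fun i => (μ i).withDensity (f i)) fun s hs => ?_).symm
  rw [withDensity_apply _ (MeasurableSet.univ_pi hs),
    ← lintegral_indicator (MeasurableSet.univ_pi hs) (fun x => ∏ i, f i (x i))]
  have hind : ∀ x, (Set.pi Set.univ s).indicator (fun x => ∏ i, f i (x i)) x
      = ∏ i, (s i).indicator (f i) (x i) := by
    intro x
    by_cases hx : x ∈ Set.pi Set.univ s
    · rw [Set.indicator_of_mem hx]
      exact Finset.prod_congr rfl fun i _ =>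
        (Set.indicator_of_mem (hx i (Set.mem_univ i)) _).symm
    · rw [Set.indicator_of_notMem hx]
      rw [Set.mem_univ_pi] at hx
      push_neg at hx
      obtain ⟨i, hxi⟩ := hx
      exact (Finset.prod_eq_zero (Finset.mem_univ i)
        (by rw [Set.indicator_of_notMem hxi])).symm
  simp_rw [hind]
  rw [lintegral_pi_prod μ _ (fun i => (hf i).indicator (hs i))]
  exact Finset.prod_congr rfl fun i _ => by
    rw [lintegral_indicator (hs i), withDensity_apply _ (hs i)]

lemma gaussian_tilt (m : ℝ) :
    (gaussianReal 0 1).withDensity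
      (fun z => ENNReal.ofReal (Real.exp (m * z - m ^ 2 / 2))) = gaussianReal m 1 := by
  have hexp : Measurable fun z : ℝ => Real.exp (m * z - m ^ 2 / 2) := by fun_prop
  rw [gaussianReal_of_var_ne_zero 0 one_ne_zero, gaussianReal_of_var_ne_zero m one_ne_zero,
    ← withDensity_mul _ (measurable_gaussianPDF _ _) hexp.ennreal_ofReal]
  congr 1
  funext z
  rw [Pi.mul_apply, gaussianPDF, gaussianPDF,
    ← ENNReal.ofReal_mul (gaussianPDFReal_nonneg _ _ _)]
  congr 1
  simp only [gaussianPDFReal, NNReal.coe_one, mul_one, sub_zero]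
  rw [mul_assoc, ← Real.exp_add]
  congr 1
  ring

abbrev EE (n n₀ : ℕ) : Type := Fin n → Fin n₀ → ℝ

end Stmt13Aux

open scoped ENNReal NNReal

/-- **main result.** Let `C` be a nonempty finite code of length-`n` sequences of
branch vectors in `{−1,+1}^{n₀}`, let `X` be uniformly distributed on `C`, let `W` have i.i.d.
standard normal components and be independent of `X`, and let `Z_k = c X_k + W_k`.  With the
metric `pm(x) = exp(c ∑_k ⟨x_k, Z_k⟩ − ½ c² n₀ n)`, for every block index `l` and every subset
`B` of `{−1,+1}^{n₀}`, almost surely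
`P(X_l ∈ B | σ(Z_1, …, Z_n)) = (∑_{x ∈ C, x_l ∈ B} pm(x)) / (∑_{x ∈ C} pm(x))`. -/
theorem stmt_13
    {Ω : Type*} [mΩ : MeasurableSpace Ω] (P : Measure Ω) [IsProbabilityMeasure P]
    (n₀ n : ℕ) (hn₀ : 0 < n₀) (hn : 0 < n) (c : ℝ) (hc : 0 < c)
    (C : Finset (Fin n → Fin n₀ → ℝ)) (hC_ne : C.Nonempty)
    (hC_pm : ∀ x ∈ C, ∀ k i, x k i = 1 ∨ x k i = -1)
    (X : Ω → (Fin n → Fin n₀ → ℝ)) (hX_meas : Measurable X)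
    (hXC : ∀ ω, X ω ∈ C)
    (hX_unif : ∀ x ∈ C, P {ω | X ω = x} = (C.card : ENNReal)⁻¹)
    (W : Ω → (Fin n → Fin n₀ → ℝ)) (hW_meas : Measurable W)
    (hW_law : P.map W
      = Measure.pi fun _ : Fin n => Measure.pi fun _ : Fin n₀ => gaussianReal 0 1)
    (hXW_indep : IndepFun X W P)
    (Z : Fin n → Ω → (Fin n₀ → ℝ))
    (hZ : ∀ k ω i, Z k ω i = c * X ω k i + W ω k i)
    (l : Fin n) (B : Set (Fin n₀ → ℝ)) (hB : ∀ v ∈ B, ∀ i, v i = 1 ∨ v i = -1) :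
    P[Set.indicator {ω | X ω l ∈ B} (fun _ => (1 : ℝ)) |
        ⨆ k : Fin n, MeasurableSpace.comap (Z k) inferInstance]
      =ᵐ[P] fun ω =>
        (∑ x ∈ C.filter (fun x => x l ∈ B),
            Real.exp (c * ∑ k, ∑ i, x k i * Z k ω i - c ^ 2 * n₀ * n / 2)) /
          (∑ x ∈ C,
            Real.exp (c * ∑ k, ∑ i, x k i * Z k ω i - c ^ 2 * n₀ * n / 2)) := by
  -- Notation
  let E : Type := Stmt13Aux.EE n n₀
  let γ : Measure E := Measure.pi fun _ : Fin n => Measure.pi fun _ : Fin n₀ => gaussianReal 0 1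
  let pm : E → E → ℝ := fun x z => Real.exp (c * ∑ k, ∑ i, x k i * z k i - c ^ 2 * n₀ * n / 2)
  let F : E → ℝ := fun z => (∑ x ∈ C.filter (fun x => x l ∈ B), pm x z) / (∑ x ∈ C, pm x z)
  let T : E → E → E := fun x w k => fun i => c * x k i + w k i
  let Zf : Ω → E := fun ω k => Z k ω
  set Cb := C.filter (fun x => x l ∈ B) with hCb
  have hCbC : Cb ⊆ C := Finset.filter_subset _ _
  -- basic measurability
  have hZk_meas : ∀ k, Measurable (Z k) := by
    intro k
    apply measurable_pi_lambda
    intro i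
    have h : (fun ω => Z k ω i) = fun ω => c * X ω k i + W ω k i := funext fun ω => hZ k ω i
    rw [h]
    fun_prop
  have hZf_meas : Measurable Zf :=
    measurable_pi_lambda _ fun k => hZk_meas k
  have hZf_eq : ∀ ω, Zf ω = T (X ω) (W ω) := by
    intro ω; funext k i; exact hZ k ω i
  have hT_meas : ∀ x : E, Measurable (T x) := by
    intro x
    apply measurable_pi_lambda; intro k
    apply measurable_pi_lambda; intro i
    fun_prop
  have hpm_meas : ∀ x : E, Measurable (pm x) := by
    intro x
    have : Measurable fun z : E => c * ∑ k, ∑ i, x k i * z k i - c ^ 2 * n₀ * n / 2 := by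
      apply Measurable.sub_const
      apply Measurable.const_mul
      apply Finset.measurable_sum; intro k _
      apply Finset.measurable_sum; intro i _
      fun_prop
    exact Real.measurable_exp.comp this
  have hF_meas : Measurable F :=
    (Finset.measurable_sum _ fun x _ => hpm_meas x).div
      (Finset.measurable_sum _ fun x _ => hpm_meas x)
  have hpm_pos : ∀ x z, 0 < pm x z := fun x z => Real.exp_pos _
  have hden_pos : ∀ z, 0 < ∑ x ∈ C, pm x z := fun z =>
    Finset.sum_pos (fun x _ => hpm_pos x z) hC_ne
  have hnum_nonneg : ∀ z, 0 ≤ ∑ x ∈ Cb, pm x z := fun z =>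
    Finset.sum_nonneg fun x _ => (hpm_pos x z).le
  have hF_nonneg : ∀ z, 0 ≤ F z := fun z => div_nonneg (hnum_nonneg z) (hden_pos z).le
  have hF_le_one : ∀ z, F z ≤ 1 := by
    intro z
    rw [div_le_one (hden_pos z)]
    exact Finset.sum_le_sum_of_subset_of_nonneg hCbC fun x _ _ => (hpm_pos x z).le
  -- the key tilting identity
  have key : ∀ x ∈ C, γ.map (T x) = γ.withDensity (fun z => ENNReal.ofReal (pm x z)) := by
    intro x hx
    have step1 : γ.map (T x)
        = Measure.pi (fun k => Measure.pi fun i => gaussianReal (c * x k i) 1) := by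
      have inner : ∀ k : Fin n, (Measure.pi fun _ : Fin n₀ => gaussianReal 0 1).map
          (fun (v : Fin n₀ → ℝ) i => c * x k i + v i)
          = Measure.pi fun i => gaussianReal (c * x k i) 1 := by
        intro k
        rw [Stmt13Aux.map_pi_pi _ (fun i => (c * x k i + ·))
          (fun i => measurable_const_add _)]
        refine congrArg Measure.pi (funext fun i => ?_)
        rw [gaussianReal_map_const_add, zero_add]
      calc γ.map (T x)
          = Measure.pi (fun k => (Measure.pi fun _ : Fin n₀ => gaussianReal 0 1).map
              (fun (v : Fin n₀ → ℝ) i => c * x k i + v i)) :=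
            Stmt13Aux.map_pi_pi _ (fun k (v : Fin n₀ → ℝ) i => c * x k i + v i)
              (fun k => measurable_pi_lambda _ fun i =>
                (measurable_pi_apply i).const_add _)
        _ = _ := congrArg Measure.pi (funext inner)
    have innerD : ∀ k : Fin n,
        (Measure.pi fun _ : Fin n₀ => gaussianReal 0 1).withDensity
          (fun v => ∏ i, ENNReal.ofReal (Real.exp (c * x k i * v i - (c * x k i) ^ 2 / 2)))
        = Measure.pi fun i => gaussianReal (c * x k i) 1 := by
      intro k
      rw [Stmt13Aux.pi_withDensity _
        (fun i t => ENNReal.ofReal (Real.exp (c * x k i * t - (c * x k i) ^ 2 / 2)))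
        (fun i => Measurable.ennreal_ofReal (show Measurable fun t : ℝ =>
          Real.exp (c * x k i * t - (c * x k i) ^ 2 / 2) by fun_prop))
        (fun i => by rw [Stmt13Aux.gaussian_tilt]; infer_instance)]
      exact congrArg Measure.pi (funext fun i => Stmt13Aux.gaussian_tilt _)
    have step2 : Measure.pi (fun k => Measure.pi fun i => gaussianReal (c * x k i) 1)
        = γ.withDensity (fun z => ∏ k, ∏ i,
            ENNReal.ofReal (Real.exp (c * x k i * z k i - (c * x k i) ^ 2 / 2))) := by
      rw [Stmt13Aux.pi_withDensity
          (fun _ : Fin n => Measure.pi fun _ : Fin n₀ => gaussianReal 0 1)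
          (fun k v => ∏ i, ENNReal.ofReal (Real.exp (c * x k i * v i - (c * x k i) ^ 2 / 2)))
          (fun k => Finset.measurable_prod _ fun i _ =>
            Measurable.ennreal_ofReal (show Measurable fun v : Fin n₀ → ℝ =>
              Real.exp (c * x k i * v i - (c * x k i) ^ 2 / 2) by fun_prop))
          (fun k => by rw [innerD k]; infer_instance)]
      exact congrArg Measure.pi (funext innerD).symm
    have hdens : ∀ z : E, (∏ k, ∏ i,
        ENNReal.ofReal (Real.exp (c * x k i * z k i - (c * x k i) ^ 2 / 2)))
        = ENNReal.ofReal (pm x z) := by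
      intro z
      have hsq : ∀ k i, (c * x k i) ^ 2 = c ^ 2 := by
        intro k i
        rcases hC_pm x hx k i with h | h <;> rw [h] <;> ring
      have h1 : ∀ k i, c * x k i * z k i - (c * x k i) ^ 2 / 2
          = c * (x k i * z k i) - c ^ 2 / 2 := by
        intro k i; rw [hsq]; ring
      have h2 : ∀ k, (∏ i, ENNReal.ofReal (Real.exp (c * (x k i * z k i) - c ^ 2 / 2)))
          = ENNReal.ofReal (Real.exp (∑ i, (c * (x k i * z k i) - c ^ 2 / 2))) := by
        intro k
        rw [Real.exp_sum, ENNReal.ofReal_prod_of_nonneg (fun i _ => (Real.exp_pos _).le)]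
      simp_rw [h1, h2]
      rw [← ENNReal.ofReal_prod_of_nonneg (fun k _ => (Real.exp_pos _).le), ← Real.exp_sum]
      have h3 : ∑ k, ∑ i, (c * (x k i * z k i) - c ^ 2 / 2)
          = c * ∑ k, ∑ i, x k i * z k i - c ^ 2 * n₀ * n / 2 := by
        simp only [Finset.sum_sub_distrib, ← Finset.mul_sum, Finset.sum_const,
          Finset.card_univ, Fintype.card_fin, nsmul_eq_mul]
        ring
      rw [h3]
    rw [step1, step2]
    congr 1
    funext z
    exact hdens z

  -- probability measures and integrability
  have hν_prob : ∀ x : E, IsProbabilityMeasure (γ.map (T x)) := fun x =>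
    Measure.isProbabilityMeasure_map (hT_meas x).aemeasurable
  have hpm_lint : ∀ x ∈ C, ∫⁻ z, ENNReal.ofReal (pm x z) ∂γ = 1 := by
    intro x hx
    calc ∫⁻ z, ENNReal.ofReal (pm x z) ∂γ
        = γ.withDensity (fun z => ENNReal.ofReal (pm x z)) Set.univ := by
          rw [withDensity_apply _ MeasurableSet.univ, Measure.restrict_univ]
      _ = γ.map (T x) Set.univ := by rw [key x hx]
      _ = 1 := (hν_prob x).measure_univ
  have hpm_int : ∀ x ∈ C, Integrable (pm x) γ := by
    intro x hx
    refine ⟨(hpm_meas x).aestronglyMeasurable, ?_⟩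
    rw [hasFiniteIntegral_iff_ofReal (ae_of_all _ fun z => (hpm_pos x z).le), hpm_lint x hx]
    exact ENNReal.one_lt_top
  have hsmul : ∀ x ∈ C, ∀ g : E → ℝ,
      ∫ z, g z ∂(γ.map (T x)) = ∫ z, pm x z * g z ∂γ := by
    intro x hx g
    rw [key x hx]
    have h0 : (fun z => ENNReal.ofReal (pm x z))
        = fun z => ((Real.toNNReal (pm x z) : ℝ≥0) : ENNReal) := rfl
    rw [h0, integral_withDensity_eq_integral_smul (hpm_meas x).real_toNNReal g]
    refine integral_congr_ae (ae_of_all _ fun z => ?_)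
    show (pm x z).toNNReal • g z = pm x z * g z
    rw [NNReal.smul_def, Real.coe_toNNReal _ (hpm_pos x z).le, smul_eq_mul]
  -- the σ-algebra
  have hm_eq : (⨆ k : Fin n, MeasurableSpace.comap (Z k) inferInstance)
      = MeasurableSpace.comap Zf inferInstance := by
    have h0 : (inferInstance : MeasurableSpace E)
        = ⨆ k : Fin n, MeasurableSpace.comap (fun z : E => z k) inferInstance := rfl
    conv_rhs => rw [h0]
    rw [MeasurableSpace.comap_iSup]
    exact iSup_congr fun k => by rw [MeasurableSpace.comap_comp]; rfl
  rw [hm_eq]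
  have hle : MeasurableSpace.comap Zf inferInstance ≤ mΩ := hZf_meas.comap_le
  haveI : SigmaFinite (P.trim hle) := by
    have h1 : IsFiniteMeasure (P.trim hle) :=
      ⟨by rw [trim_measurableSet_eq hle MeasurableSet.univ]; exact measure_lt_top P _⟩
    infer_instance
  -- measurability of the event
  have hS_eq : {ω | X ω l ∈ B} = ⋃ x ∈ Cb, X ⁻¹' {x} := by
    ext ω
    simp only [Set.mem_setOf_eq, Set.mem_iUnion, Set.mem_preimage, Set.mem_singleton_iff]
    constructor
    · intro h; exact ⟨X ω, Finset.mem_filter.2 ⟨hXC ω, h⟩, rfl⟩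
    · rintro ⟨x, hx, hXx⟩; rw [hXx]; exact (Finset.mem_filter.1 hx).2
  have hS_meas : MeasurableSet {ω | X ω l ∈ B} := by
    rw [hS_eq]
    exact MeasurableSet.biUnion Cb.countable_toSet fun x _ =>
      hX_meas (measurableSet_singleton x)
  have hf_int : Integrable (Set.indicator {ω | X ω l ∈ B} fun _ => (1 : ℝ)) P :=
    (integrable_const (1 : ℝ)).indicator hS_meas
  -- the candidate conditional expectation
  have hg_meas : Measurable fun ω => F (Zf ω) := hF_meas.comp hZf_meas
  have hg_measm : Measurable[MeasurableSpace.comap Zf inferInstance] fun ω => F (Zf ω) :=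
    hF_meas.comp fun t ht => ⟨t, ht, rfl⟩
  have hg_int : Integrable (fun ω => F (Zf ω)) P := by
    refine (integrable_const (1 : ℝ)).mono' hg_meas.aestronglyMeasurable
      (ae_of_all _ fun ω => ?_)
    rw [Real.norm_eq_abs, abs_of_nonneg (hF_nonneg _)]
    exact hF_le_one _
  refine (ae_eq_condExp_of_forall_setIntegral_eq hle hf_int
    (fun s _ _ => hg_int.integrableOn) (fun s hs _ => ?_)
    (StronglyMeasurable.aestronglyMeasurable hg_measm.stronglyMeasurable)).symm
  obtain ⟨A, hA, rfl⟩ := hs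
  -- define the truncated metric
  set G : E → ℝ := Set.indicator A F with hG_def
  have hG_meas : Measurable G := hF_meas.indicator hA
  have hG_bound : ∀ z, ‖G z‖ ≤ 1 := by
    intro z
    rw [Real.norm_eq_abs]
    by_cases hz : z ∈ A
    · rw [hG_def, Set.indicator_of_mem hz, abs_of_nonneg (hF_nonneg z)]; exact hF_le_one z
    · rw [hG_def, Set.indicator_of_notMem hz]; simp
  -- the g-side
  have hgs : ∫ ω in Zf ⁻¹' A, F (Zf ω) ∂P
      = ∑ x ∈ C, (C.card : ℝ)⁻¹ * ∫ z, pm x z * G z ∂γ := by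
    have h1 : ∀ ω, Set.indicator (Zf ⁻¹' A) (fun ω => F (Zf ω)) ω = G (Zf ω) := by
      intro ω
      rw [hG_def]
      by_cases hω : Zf ω ∈ A
      · rw [Set.indicator_of_mem (show ω ∈ Zf ⁻¹' A from hω), Set.indicator_of_mem hω]
      · rw [Set.indicator_of_notMem (show ω ∉ Zf ⁻¹' A from hω),
          Set.indicator_of_notMem hω]
    rw [← integral_indicator (hZf_meas hA)]
    simp_rw [h1]
    have h2 : ∀ ω, G (Zf ω)
        = ∑ x ∈ C, Set.indicator ({x} : Set E) (fun _ => (1 : ℝ)) (X ω) * G (T x (W ω)) := by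
      intro ω
      rw [Finset.sum_eq_single (X ω)
        (fun x _ hne => by
          rw [Set.indicator_of_notMem (fun h => hne (Set.mem_singleton_iff.1 h).symm),
            zero_mul])
        (fun h => absurd (hXC ω) h)]
      rw [Set.indicator_of_mem (Set.mem_singleton _), one_mul, hZf_eq ω]
    have hterm_meas : ∀ x : E, Measurable fun ω =>
        Set.indicator ({x} : Set E) (fun _ => (1 : ℝ)) (X ω) * G (T x (W ω)) := by
      intro x
      exact ((measurable_const.indicator (measurableSet_singleton x)).comp hX_meas).mul
        ((hG_meas.comp (hT_meas x)).comp hW_meas)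
    have hterm_int : ∀ x ∈ C, Integrable (fun ω =>
        Set.indicator ({x} : Set E) (fun _ => (1 : ℝ)) (X ω) * G (T x (W ω))) P := by
      intro x _
      refine (integrable_const (1 : ℝ)).mono' (hterm_meas x).aestronglyMeasurable
        (ae_of_all _ fun ω => ?_)
      rw [norm_mul]
      refine mul_le_one₀ ?_ (norm_nonneg _) (hG_bound _)
      by_cases h : X ω ∈ ({x} : Set E)
      · rw [Set.indicator_of_mem h]; simp
      · rw [Set.indicator_of_notMem h]; simp
    calc ∫ ω, G (Zf ω) ∂P
        = ∫ ω, ∑ x ∈ C, Set.indicator ({x} : Set E) (fun _ => (1 : ℝ)) (X ω)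
            * G (T x (W ω)) ∂P := integral_congr_ae (ae_of_all _ h2)
      _ = ∑ x ∈ C, ∫ ω, Set.indicator ({x} : Set E) (fun _ => (1 : ℝ)) (X ω)
            * G (T x (W ω)) ∂P := integral_finset_sum _ hterm_int
      _ = ∑ x ∈ C, (C.card : ℝ)⁻¹ * ∫ z, pm x z * G z ∂γ := by
          refine Finset.sum_congr rfl fun x hx => ?_
          have hφ : Measurable (Set.indicator ({x} : Set E) (fun _ => (1 : ℝ))) :=
            measurable_const.indicator (measurableSet_singleton x)
          have hψ : Measurable fun w : E => G (T x w) := hG_meas.comp (hT_meas x)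
          have hindep := hXW_indep.comp hφ hψ
          have hmul := hindep.integral_fun_mul_eq_mul_integral
            ((hφ.comp hX_meas).aestronglyMeasurable)
            ((hψ.comp hW_meas).aestronglyMeasurable)
          rw [show (fun ω => Set.indicator ({x} : Set E) (fun _ => (1 : ℝ)) (X ω)
              * G (T x (W ω))) = fun ω => (Set.indicator ({x} : Set E)
                (fun _ => (1 : ℝ)) ∘ X) ω * ((fun w => G (T x w)) ∘ W) ω from rfl]
          rw [hmul]
          congr 1
          · -- ∫ of the indicator of X = x
            have hxpre : (fun ω => Set.indicator ({x} : Set E) (fun _ => (1 : ℝ)) (X ω))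
                = Set.indicator (X ⁻¹' {x}) (fun _ => (1 : ℝ)) := by
              funext ω
              by_cases h : X ω ∈ ({x} : Set E)
              · rw [Set.indicator_of_mem h,
                  Set.indicator_of_mem (show ω ∈ X ⁻¹' {x} from h)]
              · rw [Set.indicator_of_notMem h,
                  Set.indicator_of_notMem (show ω ∉ X ⁻¹' {x} from h)]
            show ∫ ω, Set.indicator ({x} : Set E) (fun _ => (1 : ℝ)) (X ω) ∂P
              = (C.card : ℝ)⁻¹
            rw [hxpre, integral_indicator (hX_meas (measurableSet_singleton x)),
              setIntegral_const, smul_eq_mul, mul_one, measureReal_def]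
            have hx' : P (X ⁻¹' {x}) = (C.card : ENNReal)⁻¹ := hX_unif x hx
            rw [hx', ENNReal.toReal_inv, ENNReal.toReal_natCast]
          · -- ∫ of G ∘ T x ∘ W
            show ∫ ω, G (T x (W ω)) ∂P = ∫ z, pm x z * G z ∂γ
            have e1 : ∫ ω, G (T x (W ω)) ∂P = ∫ w, G (T x w) ∂(P.map W) :=
              (integral_map hW_meas.aemeasurable hψ.aestronglyMeasurable).symm
            have e2 : ∫ w, G (T x w) ∂(P.map W) = ∫ w, G (T x w) ∂γ := by
              rw [hW_law]
            have e3 : ∫ w, G (T x w) ∂γ = ∫ z, G z ∂(γ.map (T x)) :=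
              (integral_map (hT_meas x).aemeasurable hG_meas.aestronglyMeasurable).symm
            rw [e1, e2, e3]
            exact hsmul x hx G
  -- the f-side
  have hfs : ∫ ω in Zf ⁻¹' A,
      Set.indicator {ω | X ω l ∈ B} (fun _ => (1 : ℝ)) ω ∂P
      = ∑ x ∈ Cb, (C.card : ℝ)⁻¹
          * ∫ z, pm x z * Set.indicator A (fun _ => (1 : ℝ)) z ∂γ := by
    rw [setIntegral_indicator hS_meas, setIntegral_const, smul_eq_mul, mul_one]
    have hdecomp : Zf ⁻¹' A ∩ {ω | X ω l ∈ B}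
        = ⋃ x ∈ Cb, (X ⁻¹' {x} ∩ W ⁻¹' (T x ⁻¹' A)) := by
      ext ω
      simp only [Set.mem_inter_iff, Set.mem_preimage, Set.mem_setOf_eq, Set.mem_iUnion,
        Set.mem_singleton_iff]
      constructor
      · rintro ⟨hωA, hωB⟩
        refine ⟨X ω, Finset.mem_filter.2 ⟨hXC ω, hωB⟩, rfl, ?_⟩
        rw [← hZf_eq ω]; exact hωA
      · rintro ⟨x, hx, hXx, hωA⟩
        refine ⟨?_, ?_⟩
        · rw [hZf_eq ω, hXx]; exact hωA
        · rw [hXx]; exact (Finset.mem_filter.1 hx).2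
    have hdisj : (Cb : Set E).PairwiseDisjoint
        (fun x => X ⁻¹' {x} ∩ W ⁻¹' (T x ⁻¹' A)) := by
      intro x _ y _ hxy
      refine Set.disjoint_left.2 fun ω hωx hωy => hxy ?_
      have h1 : X ω = x := hωx.1
      have h2 : X ω = y := hωy.1
      rw [← h1, h2]
    have hmeas : ∀ x ∈ Cb, MeasurableSet (X ⁻¹' {x} ∩ W ⁻¹' (T x ⁻¹' A)) :=
      fun x _ => (hX_meas (measurableSet_singleton x)).inter (hW_meas ((hT_meas x) hA))
    rw [hdecomp, measureReal_def, measure_biUnion_finset hdisj hmeas]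
    have hterm : ∀ x ∈ Cb, P (X ⁻¹' {x} ∩ W ⁻¹' (T x ⁻¹' A))
        = (C.card : ENNReal)⁻¹ * γ.map (T x) A := by
      intro x hx
      rw [(indepFun_iff_measure_inter_preimage_eq_mul.1 hXW_indep) {x} (T x ⁻¹' A)
        (measurableSet_singleton x) ((hT_meas x) hA)]
      congr 1
      · exact hX_unif x (hCbC hx)
      · rw [← Measure.map_apply hW_meas ((hT_meas x) hA), hW_law]
        exact (Measure.map_apply (hT_meas x) hA).symm
    rw [Finset.sum_congr rfl hterm]
    rw [ENNReal.toReal_sum (fun x _ => ENNReal.mul_ne_top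
      (ENNReal.inv_ne_top.2 (by
        simp only [ne_eq, Nat.cast_eq_zero, Finset.card_eq_zero]
        exact hC_ne.ne_empty)) (measure_ne_top _ _))]
    refine Finset.sum_congr rfl fun x hx => ?_
    rw [ENNReal.toReal_mul, ENNReal.toReal_inv, ENNReal.toReal_natCast]
    congr 1
    rw [← hsmul x (hCbC hx) (Set.indicator A (fun _ => (1 : ℝ))),
      integral_indicator hA, setIntegral_const, smul_eq_mul, mul_one, measureReal_def]
  rw [show ∫ ω in Zf ⁻¹' A, F (Zf ω) ∂P = ∫ ω in Zf ⁻¹' A, F (Zf ω) ∂P from rfl]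
  rw [hgs, hfs]
  -- final pointwise identity
  have hint1 : ∀ x ∈ C, Integrable (fun z => pm x z * G z) γ := by
    intro x hx
    refine (hpm_int x hx).mono' ((hpm_meas x).mul hG_meas).aestronglyMeasurable
      (ae_of_all _ fun z => ?_)
    rw [norm_mul]
    calc ‖pm x z‖ * ‖G z‖ ≤ ‖pm x z‖ * 1 :=
          mul_le_mul_of_nonneg_left (hG_bound z) (norm_nonneg _)
      _ = pm x z := by rw [mul_one, Real.norm_eq_abs, abs_of_nonneg (hpm_pos x z).le]
  have hint2 : ∀ x ∈ Cb, Integrable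
      (fun z => pm x z * Set.indicator A (fun _ => (1 : ℝ)) z) γ := by
    intro x hx
    refine (hpm_int x (hCbC hx)).mono'
      ((hpm_meas x).mul (measurable_const.indicator hA)).aestronglyMeasurable
      (ae_of_all _ fun z => ?_)
    rw [norm_mul]
    have : ‖Set.indicator A (fun _ => (1 : ℝ)) z‖ ≤ 1 := by
      by_cases hz : z ∈ A
      · rw [Set.indicator_of_mem hz]; simp
      · rw [Set.indicator_of_notMem hz]; simp
    calc ‖pm x z‖ * ‖Set.indicator A (fun _ => (1 : ℝ)) z‖ ≤ ‖pm x z‖ * 1 :=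
          mul_le_mul_of_nonneg_left this (norm_nonneg _)
      _ = pm x z := by rw [mul_one, Real.norm_eq_abs, abs_of_nonneg (hpm_pos x z).le]
  rw [← Finset.mul_sum, ← Finset.mul_sum]
  congr 1
  rw [← integral_finset_sum _ hint1, ← integral_finset_sum _ hint2]
  refine integral_congr_ae (ae_of_all _ fun z => ?_)
  by_cases hz : z ∈ A
  · simp only [hG_def, Set.indicator_of_mem hz]
    rw [← Finset.sum_mul]
    simp only [mul_one]
    show (∑ x ∈ C, pm x z) * ((∑ x ∈ Cb, pm x z) / (∑ x ∈ C, pm x z)) = ∑ x ∈ Cb, pm x z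
    rw [mul_div_cancel₀ _ (hden_pos z).ne']
  · have hGz : G z = 0 := by rw [hG_def, Set.indicator_of_notMem hz]
    have hIz : Set.indicator A (fun _ => (1 : ℝ)) z = 0 := Set.indicator_of_notMem hz _
    show (∑ x ∈ C, pm x z * G z)
      = ∑ x ∈ Cb, pm x z * Set.indicator A (fun _ => (1 : ℝ)) z
    rw [hGz, hIz]
    simp
end

section
/- Conditional characteristic function identity under Q: In the following setting, for every pair of integers 0 ≤ m < n ≤ n_p, every choice of vectors ξ_{m+1}, …, ξ_n ∈ ℝ^{n₀}, and every A ∈ F_m, one has ∫_A exp(i Σ_{k=m+1}^n ⟨ξ_k, Z_k⟩) dQ = exp(−½ Σ_{k=m+1}^n |ξ_k|²) · Q(A), where Z_k = cX_k + W_k, i = √−1, and the integral is of a complex-valued function. -/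
open MeasureTheory ProbabilityTheory Real Complex Set
open scoped ENNReal NNReal

section Aux

lemma aux_pi_integral {ι : Type*} [Fintype ι] {β : Type*} [MeasurableSpace β]
    (μ : Measure β) [SigmaFinite μ] (f : ι → β → ℂ) :
    ∫ x : ι → β, ∏ i, f i (x i) ∂(Measure.pi fun _ => μ) = ∏ i, ∫ b, f i b ∂μ := by
  letI : MeasureSpace β := ⟨μ⟩
  letI : SigmaFinite (volume : Measure β) := ‹_›
  exact integral_fintype_prod_eq_prod (μ := fun _ => μ) f

lemma aux_pi_integrable {ι : Type*} [Fintype ι] {β : Type*} [MeasurableSpace β]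
    (μ : Measure β) [SigmaFinite μ] (f : ι → β → ℝ) (hf : ∀ i, Integrable (f i) μ) :
    Integrable (fun x : ι → β => ∏ i, f i (x i)) (Measure.pi fun _ => μ) := by
  letI : MeasureSpace β := ⟨μ⟩
  letI : SigmaFinite (volume : Measure β) := ‹_›
  exact Integrable.fintype_prod hf

lemma aux_gauss_integrable (z : ℂ) :
    Integrable (fun t : ℝ => Complex.exp (z * t)) (gaussianReal 0 1) := by
  rw [gaussianReal_of_var_ne_zero _ one_ne_zero]
  have hmeas : Measurable fun x : ℝ => (gaussianPDFReal 0 1 x).toNNReal :=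
    (measurable_gaussianPDFReal 0 1).real_toNNReal
  have hd : (gaussianPDF 0 1) = fun x => ((gaussianPDFReal 0 1 x).toNNReal : ℝ≥0∞) := by
    ext x; simp [gaussianPDF, ENNReal.ofReal]
  rw [hd, integrable_withDensity_iff_integrable_smul hmeas]
  have : (fun x : ℝ => ((gaussianPDFReal 0 1 x).toNNReal : ℝ≥0) • Complex.exp (z * x))
      = fun x : ℝ => ((Real.sqrt (2 * Real.pi))⁻¹ : ℝ) •
          Complex.exp (-(1/2 : ℂ) * x ^ 2 + z * x + 0) := by
    funext x
    rw [NNReal.smul_def, Real.coe_toNNReal _ (gaussianPDFReal_nonneg 0 1 x)]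
    simp only [gaussianPDFReal, NNReal.coe_one, mul_one, sub_zero]
    rw [mul_smul]
    congr 1
    rw [real_smul, Complex.ofReal_exp, ← Complex.exp_add]
    congr 1
    push_cast
    ring
  rw [this]
  exact (integrable_cexp_quadratic' (by norm_num : (-(1/2):ℂ).re < 0) z 0).smul ((Real.sqrt (2 * Real.pi))⁻¹ : ℝ)

lemma aux_gauss_integral (z : ℂ) :
    ∫ t : ℝ, Complex.exp (z * t) ∂(gaussianReal 0 1) = Complex.exp (z ^ 2 / 2) := by
  rw [gaussianReal_of_var_ne_zero _ one_ne_zero]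
  have hmeas : Measurable fun x : ℝ => (gaussianPDFReal 0 1 x).toNNReal :=
    (measurable_gaussianPDFReal 0 1).real_toNNReal
  have hd : (gaussianPDF 0 1) = fun x => ((gaussianPDFReal 0 1 x).toNNReal : ℝ≥0∞) := by
    ext x; simp [gaussianPDF, ENNReal.ofReal]
  rw [hd, integral_withDensity_eq_integral_smul hmeas]
  have : (fun x : ℝ => ((gaussianPDFReal 0 1 x).toNNReal : ℝ≥0) • Complex.exp (z * x))
      = fun x : ℝ => ((Real.sqrt (2 * Real.pi))⁻¹ : ℝ) •
          Complex.exp (-(1/2 : ℂ) * x ^ 2 + z * x + 0) := by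
    funext x
    rw [NNReal.smul_def, Real.coe_toNNReal _ (gaussianPDFReal_nonneg 0 1 x)]
    simp only [gaussianPDFReal, NNReal.coe_one, mul_one, sub_zero]
    rw [mul_smul]
    congr 1
    rw [real_smul, Complex.ofReal_exp, ← Complex.exp_add]
    congr 1
    push_cast
    ring
  rw [this, integral_smul, integral_cexp_quadratic (by norm_num : (-(1/2):ℂ).re < 0) z 0]
  have h2π : (0:ℝ) < 2 * Real.pi := by positivity
  have hsq : ((Real.pi : ℂ) / -(-(1/2))) ^ (1/2 : ℂ) = ((Real.sqrt (2 * Real.pi) : ℝ) : ℂ) := by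
    have : ((Real.pi : ℂ) / -(-(1/2))) = ((2 * Real.pi : ℝ) : ℂ) := by push_cast; ring
    rw [this]
    rw [show ((1:ℂ)/2) = (((1/2 : ℝ) : ℂ)) by norm_num]
    rw [← Complex.ofReal_cpow h2π.le]
    norm_num [Real.sqrt_eq_rpow]
  rw [hsq]
  rw [real_smul]
  rw [← mul_assoc]
  rw [← Complex.ofReal_mul]
  rw [inv_mul_cancel₀ (by positivity : Real.sqrt (2 * Real.pi) ≠ 0)]
  rw [Complex.ofReal_one, one_mul]
  congr 1
  ring

lemma aux_exp_real_integrable (s : ℝ) :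
    Integrable (fun t : ℝ => Real.exp (s * t)) (gaussianReal 0 1) := by
  refine ((aux_gauss_integrable (s : ℂ)).norm).congr (Filter.Eventually.of_forall fun t => ?_)
  show ‖Complex.exp ((s:ℂ) * t)‖ = _
  rw [Complex.norm_exp]
  congr 1
  simp [Complex.mul_re]

lemma aux_exp_abs_integrable (s : ℝ) :
    Integrable (fun t : ℝ => Real.exp (s * |t|)) (gaussianReal 0 1) := by
  refine ((aux_exp_real_integrable s).add (aux_exp_real_integrable (-s))).mono'
    ((Real.continuous_exp.comp (continuous_const.mul _root_.continuous_abs)).aestronglyMeasurable)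
    (Filter.Eventually.of_forall fun t => ?_)
  rw [Real.norm_eq_abs, abs_of_pos (Real.exp_pos _)]
  rcases abs_choice t with h | h <;> rw [h]
  · exact le_add_of_nonneg_right (Real.exp_pos _).le
  · rw [show s * -t = -s * t by ring]
    exact le_add_of_nonneg_left (Real.exp_pos _).le

lemma aux_E {n₀ : ℕ} (c : ℝ) (ξv a : Fin n₀ → ℝ) (ha : ∀ i, a i = 1 ∨ a i = -1) :
    (∫ b : Fin n₀ → ℝ, Complex.exp (Complex.I * ((∑ i, ξv i * (c * a i + b i) : ℝ) : ℂ)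
        - ((c * ∑ i, a i * b i : ℝ) : ℂ) - ((c ^ 2 * n₀ / 2 : ℝ) : ℂ))
      ∂(Measure.pi fun _ => gaussianReal 0 1))
    = Complex.exp (-(1/2) * ((∑ i, (ξv i) ^ 2 : ℝ) : ℂ)) := by
  have harg : ∀ b : Fin n₀ → ℝ,
      (Complex.I * ((∑ i, ξv i * (c * a i + b i) : ℝ) : ℂ)
        - ((c * ∑ i, a i * b i : ℝ) : ℂ) - ((c ^ 2 * n₀ / 2 : ℝ) : ℂ))
      = ∑ i, ((Complex.I * ξv i - c * a i) * (b i)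
          + (Complex.I * (c * ξv i * a i) - c ^ 2 / 2)) := by
    intro b
    have hconst : ((c : ℂ) ^ 2 * n₀ / 2) = ∑ _i : Fin n₀, (c : ℂ) ^ 2 / 2 := by
      rw [Finset.sum_const, Finset.card_univ, Fintype.card_fin, nsmul_eq_mul]
      ring
    push_cast
    rw [hconst, Finset.mul_sum, Finset.mul_sum, ← Finset.sum_sub_distrib, ← Finset.sum_sub_distrib]
    refine Finset.sum_congr rfl fun i _ => by ring
  simp_rw [harg, Complex.exp_sum]
  rw [aux_pi_integral (gaussianReal 0 1)
    (fun i t => Complex.exp ((Complex.I * ξv i - c * a i) * (t : ℂ)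
      + (Complex.I * (c * ξv i * a i) - c ^ 2 / 2)))]
  have hint : ∀ i : Fin n₀, (∫ t : ℝ, Complex.exp ((Complex.I * ξv i - c * a i) * (t : ℂ)
      + (Complex.I * (c * ξv i * a i) - c ^ 2 / 2)) ∂(gaussianReal 0 1))
      = Complex.exp (-(1/2) * ((ξv i : ℂ)) ^ 2) := by
    intro i
    simp_rw [Complex.exp_add, integral_mul_const, aux_gauss_integral]
    rw [← Complex.exp_add]
    congr 1
    rcases ha i with h | h <;> rw [h] <;> push_cast <;>
      linear_combination ((ξv i : ℂ) ^ 2 / 2) * Complex.I_sq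
  simp_rw [hint]
  rw [← Complex.exp_sum]
  congr 1
  push_cast
  rw [Finset.mul_sum]

end Aux

set_option maxHeartbeats 2000000 in
/-- Conditional characteristic function identity under `Q`: in the setting of
the change of measure `dQ = α_{n_p} dP`, for all `0 ≤ m < n ≤ n_p`, all vectors
`ξ_{m+1}, …, ξ_n ∈ ℝ^{n₀}` and every `A ∈ F_m`,
`∫_A exp(i ∑_{k=m+1}^n ⟨ξ_k, Z_k⟩) dQ = exp(−½ ∑_{k=m+1}^n |ξ_k|²) · Q(A)`. -/
theorem stmt_16
    {Ω : Type*} [mΩ : MeasurableSpace Ω] (P : Measure Ω) [IsProbabilityMeasure P]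
    (n₀ : ℕ) (hn₀ : 0 < n₀) (c : ℝ) (hc : 0 < c)
    (W : ℕ → Ω → (Fin n₀ → ℝ)) (X : ℕ → Ω → (Fin n₀ → ℝ))
    (hW_meas : ∀ k, Measurable (W k))
    (hW_law : ∀ k, 1 ≤ k → P.map (W k) = Measure.pi fun _ => gaussianReal 0 1)
    (hW_iid : iIndepFun W P)
    (hX_meas : ∀ k, Measurable (X k))
    (hX_pm : ∀ k ω i, X k ω i = 1 ∨ X k ω i = -1)
    (hXW_indep :
      IndepFun (fun ω => fun k => X k ω) (fun ω => fun k => W k ω) P)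
    (F : ℕ → MeasurableSpace Ω)
    (hF : ∀ n, F n =
      (⨆ k ≥ 1, MeasurableSpace.comap (X k) inferInstance) ⊔
        (⨆ k ∈ Finset.Icc 1 n, MeasurableSpace.comap (W k) inferInstance))
    (α : ℕ → Ω → ℝ)
    (hα : ∀ n ω, α n ω =
      Real.exp (-c * ∑ k ∈ Finset.Icc 1 n, ∑ i, X k ω i * W k ω i
        - c ^ 2 * n₀ * n / 2))
    (n_p : ℕ) (hn_p : 0 < n_p)
    (Q : Measure Ω)
    (hQ : Q = P.withDensity fun ω => ENNReal.ofReal (α n_p ω))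
    (Z : ℕ → Ω → (Fin n₀ → ℝ))
    (hZ : ∀ k ω i, Z k ω i = c * X k ω i + W k ω i) :
    ∀ m n : ℕ, m < n → n ≤ n_p → ∀ ξ : ℕ → (Fin n₀ → ℝ),
      ∀ A : Set Ω, MeasurableSet[F m] A →
        (∫ ω in A,
            Complex.exp
              (Complex.I *
                ((∑ k ∈ Finset.Icc (m + 1) n, ∑ i, ξ k i * Z k ω i : ℝ) : ℂ)) ∂Q)
          = Complex.exp
              (-(1 / 2) * ((∑ k ∈ Finset.Icc (m + 1) n, ∑ i, ξ k i ^ 2 : ℝ) : ℂ)) *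
            ((Q A).toReal : ℂ) := by
  intro m n hmn hn ξ A hAF
  -- notation
  set νE : Measure (Fin n₀ → ℝ) := Measure.pi fun _ => gaussianReal 0 1 with hνE
  set s₁ : Finset ℕ := Finset.Icc 1 m with hs₁
  set s₂ : Finset ℕ := Finset.Icc (m+1) n_p with hs₂
  set Xf : Ω → ℕ → (Fin n₀ → ℝ) := fun ω k => X k ω with hXf
  set Wf : Ω → ℕ → (Fin n₀ → ℝ) := fun ω k => W k ω with hWf
  set U : Ω → (ℕ → Fin n₀ → ℝ) × (↥s₁ → Fin n₀ → ℝ) := fun ω => (Xf ω, fun k => W (↑k) ω) with hU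
  set V : Ω → (↥s₂ → Fin n₀ → ℝ) := fun ω => fun k => W (↑k) ω with hV
  set μX : Measure (ℕ → Fin n₀ → ℝ) := P.map Xf with hμX
  set pi₁ : Measure (↥s₁ → Fin n₀ → ℝ) := Measure.pi fun _ => νE with hpi₁
  set pi₂ : Measure (↥s₂ → Fin n₀ → ℝ) := Measure.pi fun _ => νE with hpi₂
  set γ : Measure ((ℕ → Fin n₀ → ℝ) × (↥s₁ → Fin n₀ → ℝ)) := μX.prod pi₁ with hγ
  have hXfm : Measurable Xf := by
    rw [hXf]; exact measurable_pi_lambda _ fun k => hX_meas k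
  have hWfm : Measurable Wf := by
    rw [hWf]; exact measurable_pi_lambda _ fun k => hW_meas k
  have hUm : Measurable U := by
    rw [hU]; exact hXfm.prodMk (measurable_pi_lambda _ fun k => hW_meas ↑k)
  have hVm : Measurable V := by
    rw [hV]; exact measurable_pi_lambda _ fun k => hW_meas ↑k
  haveI : IsProbabilityMeasure μX := by
    rw [hμX]; exact Measure.isProbabilityMeasure_map hXfm.aemeasurable
  haveI hνEP : IsProbabilityMeasure νE := by rw [hνE]; infer_instance
  haveI : IsProbabilityMeasure pi₁ := by rw [hpi₁]; infer_instance
  haveI : IsProbabilityMeasure pi₂ := by rw [hpi₂]; infer_instance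
  haveI : IsProbabilityMeasure γ := by rw [hγ]; infer_instance
  have hmle : m ≤ n_p := le_trans hmn.le hn
  have hdisj : Disjoint s₁ s₂ := by
    rw [hs₁, hs₂]
    simp only [Finset.disjoint_left, Finset.mem_Icc]
    intro a h1 h2
    omega
  have hsplit : Finset.Icc 1 n_p = s₁ ∪ s₂ := by
    rw [hs₁, hs₂]
    ext x
    simp only [Finset.mem_Icc, Finset.mem_union]
    omega
  have hsub : Finset.Icc (m+1) n ⊆ s₂ := by
    rw [hs₂]
    intro k hk
    simp only [Finset.mem_Icc] at hk ⊢
    omega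
  have hcard₁ : s₁.card = m := by rw [hs₁, Nat.card_Icc]; omega
  have hcard₂ : s₂.card = n_p - m := by rw [hs₂, Nat.card_Icc]; omega
  -- A comes from a measurable set B through U
  have hFle : F m ≤ MeasurableSpace.comap U inferInstance := by
    rw [hF m]
    apply sup_le
    · refine iSup_le fun k => iSup_le fun _ => ?_
      have hXk : X k = (fun p : (ℕ → Fin n₀ → ℝ) × (↥s₁ → Fin n₀ → ℝ) => p.1 k) ∘ U := by
        funext ω; rw [hU]; rfl
      rw [hXk, ← MeasurableSpace.comap_comp]
      exact MeasurableSpace.comap_mono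
        (Measurable.comap_le ((measurable_pi_apply k).comp measurable_fst))
    · refine iSup_le fun k => iSup_le fun hk => ?_
      have hk' : k ∈ s₁ := by rw [hs₁]; exact hk
      have hWk : W k = (fun p : (ℕ → Fin n₀ → ℝ) × (↥s₁ → Fin n₀ → ℝ) => p.2 ⟨k, hk'⟩) ∘ U := by
        funext ω; rw [hU]; rfl
      rw [hWk, ← MeasurableSpace.comap_comp]
      exact MeasurableSpace.comap_mono
        (Measurable.comap_le ((measurable_pi_apply _).comp measurable_snd))
  obtain ⟨B, hB, hUB⟩ :
      ∃ B : Set ((ℕ → Fin n₀ → ℝ) × (↥s₁ → Fin n₀ → ℝ)), MeasurableSet B ∧ U ⁻¹' B = A :=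
    MeasurableSpace.measurableSet_comap.mp (hFle A hAF)
  have hAmeas : MeasurableSet A := hUB ▸ hUm hB
  -- the joint law
  have hblock : ∀ s : Finset ℕ, (∀ k ∈ s, 1 ≤ k) →
      P.map (fun ω (k : ↥s) => W (↑k) ω) = Measure.pi (fun _ : ↥s => νE) := by
    intro s hs
    classical
    have hmeas : Measurable (fun ω (k : ↥s) => W (↑k) ω) :=
      measurable_pi_lambda _ fun k => hW_meas ↑k
    refine (Measure.pi_eq fun t ht => ?_).symm
    rw [Measure.map_apply hmeas (MeasurableSet.univ_pi ht)]
    have hset : (fun ω (k : ↥s) => W (↑k) ω) ⁻¹' (Set.univ.pi t)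
        = ⋂ k ∈ s, W k ⁻¹' (if h : k ∈ s then t ⟨k, h⟩ else Set.univ) := by
      ext ω
      simp only [Set.mem_preimage, Set.mem_pi, Set.mem_univ, forall_true_left, Set.mem_iInter]
      constructor
      · intro h k hk; rw [dif_pos hk]; exact h ⟨k, hk⟩
      · intro h k; have := h ↑k k.2; rwa [dif_pos k.2] at this
    rw [hset, hW_iid.measure_inter_preimage_eq_mul s
      (fun k hk => by rw [dif_pos hk]; exact ht ⟨k, hk⟩)]
    rw [← Finset.prod_attach s
      (fun k => P (W k ⁻¹' (if h : k ∈ s then t ⟨k, h⟩ else Set.univ)))]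
    rw [show (Finset.univ : Finset ↥s) = s.attach from Finset.univ_eq_attach s]
    refine Finset.prod_congr rfl fun k _ => ?_
    rw [dif_pos k.2, ← Measure.map_apply (hW_meas ↑k) (ht k), hW_law ↑k (hs ↑k k.2), hνE]
  have hTlaw : P.map (fun ω => (U ω, V ω)) = γ.prod pi₂ := by
    have hr₁ : Measurable (fun w : ℕ → Fin n₀ → ℝ => fun k : ↥s₁ => w ↑k) :=
      measurable_pi_lambda _ fun k => measurable_pi_apply _
    have hr₂ : Measurable (fun w : ℕ → Fin n₀ → ℝ => fun k : ↥s₂ => w ↑k) :=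
      measurable_pi_lambda _ fun k => measurable_pi_apply _
    haveI : IsProbabilityMeasure (P.map Wf) := Measure.isProbabilityMeasure_map hWfm.aemeasurable
    have hs₁ge : ∀ k ∈ s₁, 1 ≤ k := by rw [hs₁]; intro k hk; exact (Finset.mem_Icc.mp hk).1
    have hs₂ge : ∀ k ∈ s₂, 1 ≤ k := by
      rw [hs₂]; intro k hk; have := (Finset.mem_Icc.mp hk).1; omega
    have hrr : P.map (fun ω => ((fun k : ↥s₁ => W (↑k) ω), (fun k : ↥s₂ => W (↑k) ω)))
        = pi₁.prod pi₂ := by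
      have hind := hW_iid.indepFun_finset s₁ s₂ hdisj hW_meas
      have h2 := (indepFun_iff_map_prod_eq_prod_map_map
        (measurable_pi_lambda _ fun k : ↥s₁ => hW_meas ↑k).aemeasurable
        (measurable_pi_lambda _ fun k : ↥s₂ => hW_meas ↑k).aemeasurable).mp hind
      rw [h2, hblock s₁ hs₁ge, hblock s₂ hs₂ge, hpi₁, hpi₂]
    have hXWf : IndepFun Xf Wf P := hXW_indep
    have hpair : P.map (fun ω => (Xf ω, Wf ω)) = μX.prod (P.map Wf) := by
      rw [hμX]
      exact (indepFun_iff_map_prod_eq_prod_map_map hXfm.aemeasurable hWfm.aemeasurable).mp hXWf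
    set rr : (ℕ → Fin n₀ → ℝ) → (↥s₁ → Fin n₀ → ℝ) × (↥s₂ → Fin n₀ → ℝ) :=
      fun w => ((fun k : ↥s₁ => w ↑k), (fun k : ↥s₂ => w ↑k)) with hrrdef
    have hrrm : Measurable rr := by rw [hrrdef]; exact hr₁.prodMk hr₂
    have hmprr : MeasurePreserving rr (P.map Wf) (pi₁.prod pi₂) := by
      refine ⟨hrrm, ?_⟩
      rw [Measure.map_map hrrm hWfm]
      rw [show rr ∘ Wf = (fun ω => ((fun k : ↥s₁ => W (↑k) ω), (fun k : ↥s₂ => W (↑k) ω)))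
        from by funext ω; rw [hrrdef, hWf]; rfl]
      exact hrr
    have hmp2 : MeasurePreserving (Prod.map (id : (ℕ → Fin n₀ → ℝ) → _) rr)
        (μX.prod (P.map Wf)) (μX.prod (pi₁.prod pi₂)) :=
      (MeasurePreserving.id μX).prod hmprr
    have hcomp : (fun ω => (U ω, V ω))
        = (MeasurableEquiv.prodAssoc.symm ∘ (Prod.map id rr) ∘ (fun ω => (Xf ω, Wf ω))) := by
      funext ω
      rw [hU, hV, hrrdef, hXf, hWf]
      rfl
    rw [hcomp]
    rw [← Measure.map_map MeasurableEquiv.prodAssoc.symm.measurable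
      ((measurable_id.prodMap hrrm).comp (hXfm.prodMk hWfm))]
    rw [← Measure.map_map (measurable_id.prodMap hrrm) (hXfm.prodMk hWfm)]
    rw [hpair, hmp2.map_eq]
    have hassoc := (measurePreserving_prodAssoc μX pi₁ pi₂).map_eq
    rw [← hassoc, Measure.map_map MeasurableEquiv.prodAssoc.symm.measurable
      MeasurableEquiv.prodAssoc.measurable]
    rw [show (⇑MeasurableEquiv.prodAssoc.symm ∘ ⇑MeasurableEquiv.prodAssoc) = id from by
      funext p; exact MeasurableEquiv.prodAssoc.symm_apply_apply p]
    rw [Measure.map_id]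
  -- measurability of α
  have hαm : Measurable (α n_p) := by
    have hform : α n_p = fun ω => Real.exp (-c * ∑ k ∈ Finset.Icc 1 n_p, ∑ i, X k ω i * W k ω i
        - c ^ 2 * n₀ * n_p / 2) := funext fun ω => hα n_p ω
    rw [hform]
    have hsum : Measurable fun ω => ∑ k ∈ Finset.Icc 1 n_p, ∑ i, X k ω i * W k ω i :=
      Finset.measurable_sum _ fun k _ => Finset.measurable_sum _ fun i _ =>
        ((measurable_pi_apply i).comp (hX_meas k)).mul
          ((measurable_pi_apply i).comp (hW_meas k))
    exact ((hsum.const_mul (-c)).sub measurable_const).exp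
  -- the master identity
  set g₀ : ℕ → (Fin n₀ → ℝ) → (Fin n₀ → ℝ) → ℂ := fun k a b =>
    Complex.exp (- ((c * ∑ i, a i * b i : ℝ) : ℂ) - ((c ^ 2 * n₀ / 2 : ℝ) : ℂ)) with hg₀
  set R : ℂ := ∫ y : (ℕ → Fin n₀ → ℝ) × (↥s₁ → Fin n₀ → ℝ),
      (B.indicator (fun _ => (1:ℂ)) y) * ∏ k : ↥s₁, g₀ (↑k) (y.1 ↑k) (y.2 k) ∂γ with hR
  have key : ∀ ξv : ℕ → Fin n₀ → ℝ, (∀ k, k ∉ Finset.Icc (m+1) n → ξv k = 0) →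
      ∫ ω, (A.indicator (fun _ => (1:ℂ)) ω) *
          (Complex.exp (Complex.I *
            ((∑ k ∈ s₂, ∑ i, ξv k i * (c * X k ω i + W k ω i) : ℝ) : ℂ)) *
            ((α n_p ω : ℝ) : ℂ)) ∂P
        = (∏ k : ↥s₂, Complex.exp (-(1/2) * ((∑ i, ξv (↑k) i ^ 2 : ℝ) : ℂ))) * R := by
    intro ξv hz
    classical
    set D := ((ℕ → Fin n₀ → ℝ) × (↥s₁ → Fin n₀ → ℝ)) × (↥s₂ → Fin n₀ → ℝ) with hD
    set gξ : ℕ → (Fin n₀ → ℝ) → (Fin n₀ → ℝ) → ℂ := fun k a b =>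
      Complex.exp (Complex.I * ((∑ i, ξv k i * (c * a i + b i) : ℝ) : ℂ)
        - ((c * ∑ i, a i * b i : ℝ) : ℂ) - ((c ^ 2 * n₀ / 2 : ℝ) : ℂ)) with hgξ
    set G : D → ℂ := fun p =>
      (B.indicator (fun _ => (1:ℂ)) p.1) *
        ((∏ k : ↥s₁, g₀ (↑k) (p.1.1 ↑k) (p.1.2 k)) *
          ∏ k : ↥s₂, gξ (↑k) (p.1.1 ↑k) (p.2 k)) with hG
    -- pointwise identity
    have hpt : ∀ ω, (A.indicator (fun _ => (1:ℂ)) ω) *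
        (Complex.exp (Complex.I *
          ((∑ k ∈ s₂, ∑ i, ξv k i * (c * X k ω i + W k ω i) : ℝ) : ℂ)) *
          ((α n_p ω : ℝ) : ℂ)) = G (U ω, V ω) := by
      intro ω
      simp only [hG, hU, hV, hXf]
      congr 1
      · -- indicators agree
        by_cases hω : ω ∈ A
        · have hωB : (((fun k => X k ω, fun k : ↥s₁ => W (↑k) ω)) :
              (ℕ → Fin n₀ → ℝ) × (↥s₁ → Fin n₀ → ℝ)) ∈ B := by
            rw [← hUB] at hω
            simpa [hU, hXf] using hω
          rw [Set.indicator_of_mem hω, Set.indicator_of_mem hωB]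
        · have hωB : ¬ ((((fun k => X k ω, fun k : ↥s₁ => W (↑k) ω)) :
              (ℕ → Fin n₀ → ℝ) × (↥s₁ → Fin n₀ → ℝ)) ∈ B) := by
            rw [← hUB] at hω
            simpa [hU, hXf] using hω
          rw [Set.indicator_of_notMem hω, Set.indicator_of_notMem hωB]
      · -- exponentials agree
        simp only [hg₀, hgξ]
        rw [hα n_p ω, Complex.ofReal_exp, ← Complex.exp_add]
        rw [← Complex.exp_sum, ← Complex.exp_sum, ← Complex.exp_add]
        congr 1
        rw [Finset.sum_coe_sort s₁ (fun k =>
          (- ((c * ∑ i, X k ω i * W k ω i : ℝ) : ℂ) - ((c ^ 2 * n₀ / 2 : ℝ) : ℂ)))]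
        rw [Finset.sum_coe_sort s₂ (fun k =>
          (Complex.I * ((∑ i, ξv k i * (c * X k ω i + W k ω i) : ℝ) : ℂ)
            - ((c * ∑ i, X k ω i * W k ω i : ℝ) : ℂ) - ((c ^ 2 * n₀ / 2 : ℝ) : ℂ)))]
        push_cast
        rw [hsplit, Finset.sum_union hdisj]
        rw [Finset.sum_sub_distrib, Finset.sum_sub_distrib, Finset.sum_sub_distrib]
        rw [Finset.sum_const, Finset.sum_const, hcard₁, hcard₂, nsmul_eq_mul, nsmul_eq_mul]
        have hnpc : ((n_p - m : ℕ) : ℂ) = (n_p : ℂ) - m := by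
          push_cast [Nat.cast_sub hmle]
          ring
        rw [hnpc]
        rw [Finset.sum_neg_distrib, ← Finset.mul_sum, ← Finset.mul_sum, ← Finset.mul_sum]
        ring
    -- measurability of G
    have hGm : Measurable G := by
      simp only [hG, hg₀, hgξ]
      have h1 : Measurable fun p : D => B.indicator (fun _ => (1:ℂ)) p.1 :=
        (measurable_const.indicator hB).comp measurable_fst
      have hXev : ∀ (k : ℕ) (i : Fin n₀), Measurable fun p : D => p.1.1 k i :=
        fun k i => (measurable_pi_apply i).comp ((measurable_pi_apply k).comp
          (measurable_fst.comp measurable_fst))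
      have hW1ev : ∀ (k : ↥s₁) (i : Fin n₀), Measurable fun p : D => p.1.2 k i :=
        fun k i => (measurable_pi_apply i).comp ((measurable_pi_apply k).comp
          (measurable_snd.comp measurable_fst))
      have hW2ev : ∀ (k : ↥s₂) (i : Fin n₀), Measurable fun p : D => p.2 k i :=
        fun k i => (measurable_pi_apply i).comp ((measurable_pi_apply k).comp measurable_snd)
      refine h1.mul (Measurable.mul ?_ ?_)
      · refine Finset.measurable_prod _ fun k _ => ?_
        refine Complex.measurable_exp.comp (Measurable.sub (Measurable.neg ?_) measurable_const)
        exact Complex.measurable_ofReal.comp ((Finset.measurable_sum _ fun i _ =>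
          (hXev (↑k) i).mul (hW1ev k i)).const_mul c)
      · refine Finset.measurable_prod _ fun k _ => ?_
        refine Complex.measurable_exp.comp (Measurable.sub (Measurable.sub ?_ ?_) measurable_const)
        · refine Measurable.const_mul ?_ Complex.I
          refine Complex.measurable_ofReal.comp (Finset.measurable_sum _ fun i _ => ?_)
          exact (((hXev (↑k) i).const_mul c).add (hW2ev k i)).const_mul (ξv (↑k) i)
        · exact Complex.measurable_ofReal.comp ((Finset.measurable_sum _ fun i _ =>
            (hXev (↑k) i).mul (hW2ev k i)).const_mul c)
    -- a.e. facts about the X-coordinate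
    have hNm : MeasurableSet {x : ℕ → Fin n₀ → ℝ | ∀ k i, x k i = 1 ∨ x k i = -1} := by
      have : {x : ℕ → Fin n₀ → ℝ | ∀ k i, x k i = 1 ∨ x k i = -1}
          = ⋂ (k : ℕ), ⋂ (i : Fin n₀),
            ((fun x : ℕ → Fin n₀ → ℝ => x k i) ⁻¹' {1} ∪
              (fun x : ℕ → Fin n₀ → ℝ => x k i) ⁻¹' {-1}) := by
        ext x
        simp [Set.mem_iInter]
      rw [this]
      exact MeasurableSet.iInter fun k => MeasurableSet.iInter fun i =>
        (((measurable_pi_apply i).comp (measurable_pi_apply k))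
            (measurableSet_singleton 1)).union
          (((measurable_pi_apply i).comp (measurable_pi_apply k))
            (measurableSet_singleton (-1)))
    have hμXN : μX ({x : ℕ → Fin n₀ → ℝ | ∀ k i, x k i = 1 ∨ x k i = -1}ᶜ) = 0 := by
      rw [hμX, Measure.map_apply hXfm hNm.compl]
      have : Xf ⁻¹' ({x : ℕ → Fin n₀ → ℝ | ∀ k i, x k i = 1 ∨ x k i = -1}ᶜ) = ∅ := by
        ext ω
        simp only [Set.mem_preimage, Set.mem_compl_iff, Set.mem_setOf_eq,
          Set.mem_empty_iff_false, iff_false, not_not, hXf]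
        exact fun k i => hX_pm k ω i
      rw [this]
      simp
    have haeXγ : ∀ᵐ y ∂γ, ∀ (k : ℕ) (i : Fin n₀), y.1 k i = 1 ∨ y.1 k i = -1 := by
      rw [ae_iff]
      refine measure_mono_null (fun y hy => ?_)
        (show γ (({x : ℕ → Fin n₀ → ℝ | ∀ k i, x k i = 1 ∨ x k i = -1}ᶜ) ×ˢ
          (Set.univ : Set (↥s₁ → Fin n₀ → ℝ))) = 0 from ?_)
      · exact ⟨hy, trivial⟩
      · rw [hγ, Measure.prod_prod, hμXN, zero_mul]
    have haeprod : ∀ᵐ p ∂(γ.prod pi₂),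
        ∀ (k : ℕ) (i : Fin n₀), p.1.1 k i = 1 ∨ p.1.1 k i = -1 := by
      rw [ae_iff]
      refine measure_mono_null (fun p hp => ?_)
        (show (γ.prod pi₂) ((({x : ℕ → Fin n₀ → ℝ | ∀ k i, x k i = 1 ∨ x k i = -1}ᶜ) ×ˢ
          (Set.univ : Set (↥s₁ → Fin n₀ → ℝ))) ×ˢ
          (Set.univ : Set (↥s₂ → Fin n₀ → ℝ))) = 0 from ?_)
      · exact ⟨⟨hp, trivial⟩, trivial⟩
      · rw [Measure.prod_prod, hγ, Measure.prod_prod, hμXN, zero_mul, zero_mul]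
    -- integrability of G
    have hGint : Integrable G (γ.prod pi₂) := by
      have hΦE : Integrable (fun b : Fin n₀ → ℝ => ∏ i, Real.exp (c * |b i|)) νE := by
        rw [hνE]
        exact aux_pi_integrable _ _ fun i => aux_exp_abs_integrable c
      have hΦ1 : Integrable (fun v : ↥s₁ → Fin n₀ → ℝ =>
          ∏ k : ↥s₁, ∏ i, Real.exp (c * |v k i|)) pi₁ := by
        rw [hpi₁]
        exact aux_pi_integrable νE
          (fun (_ : ↥s₁) (b : Fin n₀ → ℝ) => ∏ i, Real.exp (c * |b i|)) fun _ => hΦE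
      have hΦ2 : Integrable (fun v : ↥s₂ → Fin n₀ → ℝ =>
          ∏ k : ↥s₂, ∏ i, Real.exp (c * |v k i|)) pi₂ := by
        rw [hpi₂]
        exact aux_pi_integrable νE
          (fun (_ : ↥s₂) (b : Fin n₀ → ℝ) => ∏ i, Real.exp (c * |b i|)) fun _ => hΦE
      have hD1 : Integrable (fun y : (ℕ → Fin n₀ → ℝ) × (↥s₁ → Fin n₀ → ℝ) =>
          ∏ k : ↥s₁, ∏ i, Real.exp (c * |y.2 k i|)) γ := by
        rw [hγ]
        have h := ((integrable_const (1:ℝ)) : Integrable (fun _ => (1:ℝ)) μX).mul_prod hΦ1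
        simpa using h
      have hDint := hD1.mul_prod hΦ2
      refine hDint.mono' hGm.aestronglyMeasurable ?_
      filter_upwards [haeprod] with p hp
      simp only [hG]
      rw [norm_mul, norm_mul]
      have hper : ∀ (kk : ℕ) (a b : Fin n₀ → ℝ), (∀ i, a i = 1 ∨ a i = -1) →
          ∀ z : ℂ, z.re = 0 →
          Real.exp ((z - ((c * ∑ i, a i * b i : ℝ) : ℂ) - ((c ^ 2 * n₀ / 2 : ℝ) : ℂ)).re)
            ≤ ∏ i, Real.exp (c * |b i|) := by
        intro kk a b ha z hz
        rw [← Real.exp_sum]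
        apply Real.exp_le_exp.mpr
        have hre : (z - ((c * ∑ i, a i * b i : ℝ) : ℂ) - ((c ^ 2 * n₀ / 2 : ℝ) : ℂ)).re
            = -(c * ∑ i, a i * b i) - c ^ 2 * n₀ / 2 := by
          rw [Complex.sub_re, Complex.sub_re, hz, Complex.ofReal_re, Complex.ofReal_re]
          ring
        rw [hre]
        have h1 : |∑ i, a i * b i| ≤ ∑ i, |b i| := by
          refine (Finset.abs_sum_le_sum_abs _ _).trans (Finset.sum_le_sum fun i _ => ?_)
          rw [abs_mul]
          rcases ha i with h | h <;> rw [h] <;> simp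
        have h2 : -(c * ∑ i, a i * b i) ≤ c * ∑ i, |b i| := by
          have := mul_le_mul_of_nonneg_left h1 hc.le
          have habs := neg_abs_le (∑ i, a i * b i)
          nlinarith
        have h3 : (0:ℝ) ≤ c ^ 2 * n₀ / 2 := by positivity
        rw [← Finset.mul_sum]
        linarith
      have hb₀ : ‖∏ k : ↥s₁, g₀ (↑k) (p.1.1 ↑k) (p.1.2 k)‖
          ≤ ∏ k : ↥s₁, ∏ i, Real.exp (c * |p.1.2 k i|) := by
        rw [norm_prod]
        refine Finset.prod_le_prod (fun k _ => norm_nonneg _) fun k _ => ?_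
        simp only [hg₀]
        rw [Complex.norm_exp]
        have := hper (↑k) (p.1.1 ↑k) (p.1.2 k) (fun i => hp (↑k) i) 0 rfl
        simpa using this
      have hbξ : ‖∏ k : ↥s₂, gξ (↑k) (p.1.1 ↑k) (p.2 k)‖
          ≤ ∏ k : ↥s₂, ∏ i, Real.exp (c * |p.2 k i|) := by
        rw [norm_prod]
        refine Finset.prod_le_prod (fun k _ => norm_nonneg _) fun k _ => ?_
        simp only [hgξ]
        rw [Complex.norm_exp]
        exact hper (↑k) (p.1.1 ↑k) (p.2 k) (fun i => hp (↑k) i) _ (by simp)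
      have hind : ‖B.indicator (fun _ => (1:ℂ)) p.1‖ ≤ 1 := by
        by_cases h : p.1 ∈ B <;> simp [h]
      have hprodnn : (0:ℝ) ≤ ∏ k : ↥s₁, ∏ i, Real.exp (c * |p.1.2 k i|) :=
        Finset.prod_nonneg fun k _ => Finset.prod_nonneg fun i _ => (Real.exp_pos _).le
      have hprodnn₂ : (0:ℝ) ≤ ∏ k : ↥s₂, ∏ i, Real.exp (c * |p.2 k i|) :=
        Finset.prod_nonneg fun k _ => Finset.prod_nonneg fun i _ => (Real.exp_pos _).le
      calc ‖B.indicator (fun _ => (1:ℂ)) p.1‖ *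
            (‖∏ k : ↥s₁, g₀ (↑k) (p.1.1 ↑k) (p.1.2 k)‖ *
              ‖∏ k : ↥s₂, gξ (↑k) (p.1.1 ↑k) (p.2 k)‖)
          ≤ 1 * ((∏ k : ↥s₁, ∏ i, Real.exp (c * |p.1.2 k i|)) *
              (∏ k : ↥s₂, ∏ i, Real.exp (c * |p.2 k i|))) := by
            refine mul_le_mul hind ?_ (by positivity) one_pos.le
            exact mul_le_mul hb₀ hbξ (norm_nonneg _) hprodnn
        _ = (∏ k : ↥s₁, ∏ i, Real.exp (c * |p.1.2 k i|)) *
              (∏ k : ↥s₂, ∏ i, Real.exp (c * |p.2 k i|)) := one_mul _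
    -- computation
    rw [integral_congr_ae (Filter.Eventually.of_forall hpt)]
    have hmapeq : ∫ ω, G (U ω, V ω) ∂P
        = ∫ p, G p ∂(P.map (fun ω => (U ω, V ω))) :=
      (integral_map (hUm.prodMk hVm).aemeasurable hGm.aestronglyMeasurable).symm
    rw [hmapeq, hTlaw]
    rw [MeasureTheory.integral_prod _ hGint]
    have hinner : ∀ᵐ y ∂γ, (∫ w₂, G (y, w₂) ∂pi₂)
        = (∏ k : ↥s₂, Complex.exp (-(1/2) * ((∑ i, ξv (↑k) i ^ 2 : ℝ) : ℂ))) *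
          ((B.indicator (fun _ => (1:ℂ)) y) * ∏ k : ↥s₁, g₀ (↑k) (y.1 ↑k) (y.2 k)) := by
      filter_upwards [haeXγ] with y hy
      have hGy : ∀ w₂ : ↥s₂ → Fin n₀ → ℝ, G (y, w₂)
          = ((B.indicator (fun _ => (1:ℂ)) y) * ∏ k : ↥s₁, g₀ (↑k) (y.1 ↑k) (y.2 k)) *
            ∏ k : ↥s₂, gξ (↑k) (y.1 ↑k) (w₂ k) := by
        intro w₂
        simp only [hG]
        ring
      simp_rw [hGy]
      rw [MeasureTheory.integral_const_mul]
      rw [hpi₂, hνE]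
      rw [aux_pi_integral (Measure.pi fun _ => gaussianReal 0 1)
        (fun (k : ↥s₂) (b : Fin n₀ → ℝ) => gξ (↑k) (y.1 ↑k) b)]
      have heach : ∀ k : ↥s₂,
          (∫ b, gξ (↑k) (y.1 ↑k) b ∂(Measure.pi fun _ => gaussianReal 0 1))
          = Complex.exp (-(1/2) * ((∑ i, ξv (↑k) i ^ 2 : ℝ) : ℂ)) := by
        intro k
        simp only [hgξ]
        exact aux_E c (ξv ↑k) (y.1 ↑k) (fun i => hy (↑k) i)
      rw [Finset.prod_congr rfl fun k _ => heach k]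
      ring
    rw [integral_congr_ae hinner]
    rw [MeasureTheory.integral_const_mul]
  -- apply with ξ' and with 0
  set ξ' : ℕ → Fin n₀ → ℝ := fun k => if k ∈ Finset.Icc (m+1) n then ξ k else 0 with hξ'
  have hz' : ∀ k, k ∉ Finset.Icc (m+1) n → ξ' k = 0 := by
    intro k hk
    rw [hξ']
    simp [hk]
  have key₁ := key ξ' hz'
  have key₀' : ∫ ω, (A.indicator (fun _ => (1:ℂ)) ω) * ((α n_p ω : ℝ) : ℂ) ∂P = R := by
    have h := key (fun _ => 0) (fun _ _ => rfl)
    simpa using h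
  have hQLHS : (∫ ω in A, Complex.exp (Complex.I *
        ((∑ k ∈ Finset.Icc (m + 1) n, ∑ i, ξ k i * Z k ω i : ℝ) : ℂ)) ∂Q)
      = ∫ ω, (A.indicator (fun _ => (1:ℂ)) ω) *
          (Complex.exp (Complex.I *
            ((∑ k ∈ s₂, ∑ i, ξ' k i * (c * X k ω i + W k ω i) : ℝ) : ℂ)) *
            ((α n_p ω : ℝ) : ℂ)) ∂P := by
    rw [hQ, restrict_withDensity hAmeas]
    rw [show (fun ω => ENNReal.ofReal (α n_p ω))
        = fun ω => (((α n_p ω).toNNReal : ℝ≥0) : ℝ≥0∞) from rfl]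
    rw [integral_withDensity_eq_integral_smul hαm.real_toNNReal]
    rw [← integral_indicator hAmeas]
    refine integral_congr_ae (Filter.Eventually.of_forall fun ω => ?_)
    by_cases hω : ω ∈ A
    · simp only [Set.indicator_of_mem hω]
      rw [NNReal.smul_def, Real.coe_toNNReal _ (by rw [hα n_p ω]; exact Real.exp_nonneg _)]
      have hsum : (∑ k ∈ Finset.Icc (m + 1) n, ∑ i, ξ k i * Z k ω i)
          = ∑ k ∈ s₂, ∑ i, ξ' k i * (c * X k ω i + W k ω i) := by
        have e1 : (∑ k ∈ Finset.Icc (m + 1) n, ∑ i, ξ k i * Z k ω i)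
            = ∑ k ∈ Finset.Icc (m + 1) n, ∑ i, ξ' k i * (c * X k ω i + W k ω i) :=
          Finset.sum_congr rfl fun k hk => Finset.sum_congr rfl fun i _ => by
            simp only [hξ', if_pos hk, hZ]
        rw [e1]
        refine Finset.sum_subset hsub fun k _ hnk => ?_
        rw [hz' k hnk]
        simp
      rw [hsum, real_smul]
      ring
    · simp only [Set.indicator_of_notMem hω]
      simp
  rw [hQLHS, key₁]
  have hC : (∏ k : ↥s₂, Complex.exp (-(1/2) * ((∑ i, ξ' (↑k) i ^ 2 : ℝ) : ℂ)))
      = Complex.exp (-(1 / 2) * ((∑ k ∈ Finset.Icc (m + 1) n, ∑ i, ξ k i ^ 2 : ℝ) : ℂ)) := by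
    rw [Finset.prod_coe_sort s₂ (fun k => Complex.exp (-(1/2) * ((∑ i, ξ' k i ^ 2 : ℝ) : ℂ)))]
    rw [← Complex.exp_sum]
    congr 1
    rw [← Finset.sum_subset hsub (fun k _ hnk => by rw [hz' k hnk]; simp)]
    push_cast
    rw [Finset.mul_sum]
    refine Finset.sum_congr rfl fun k hk => ?_
    simp only [hξ', if_pos hk]
  rw [hC]
  have hQA : (((Q A).toReal : ℝ) : ℂ) = R := by
    have h1 : Q A = ∫⁻ ω in A, ENNReal.ofReal (α n_p ω) ∂P := by
      rw [hQ, withDensity_apply _ hAmeas]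
    have h2 : ∫ ω in A, α n_p ω ∂P = (Q A).toReal := by
      rw [h1, integral_eq_lintegral_of_nonneg_ae
        (Filter.Eventually.of_forall fun ω => by rw [hα n_p ω]; exact Real.exp_nonneg _)
        hαm.aestronglyMeasurable.restrict]
    rw [← h2, ← integral_indicator hAmeas]
    have hcoe : ∫ x, ((A.indicator (α n_p) x : ℝ) : ℂ) ∂P
        = ((∫ x, A.indicator (α n_p) x ∂P : ℝ) : ℂ) := integral_ofReal
    rw [← hcoe]
    refine Eq.trans (integral_congr_ae (Filter.Eventually.of_forall fun ω => ?_)) key₀'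
    by_cases hω : ω ∈ A
    · simp only [Set.indicator_of_mem hω]
      simp
    · simp only [Set.indicator_of_notMem hω]
      simp
  rw [hQA]
end
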